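/- arXiv:1801.00978 — 6 statements merged into one kernel-verified Lean document; each statement's English description precedes it below -/
import Mathlib

section
/- Let H be a real Hilbert space and V, Ṽ closed subspaces of H with V ≠ {0} and Ṽ ≠ {0}. Suppose Q : H → H is a bounded linear projector (Q∘Q = Q) with range Q = V and range(I − Q) = Ṽ^⊥. Then the inf-sup constant of the pair (V, Ṽ) is positive, it equals the inf-sup constant of the pair (Ṽ, V), and its common value equals ‖Q‖^{-1}. -/
open scoped RealInnerProductSpace

/-- The inf-sup constant `inf_{0≠v∈V} sup_{0≠w∈W} ⟨v,w⟩_H/(‖v‖_H ‖w‖_H)` of a pair of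
subspaces of a real Hilbert space. -/
noncomputable def infSupConst {H : Type*} [NormedAddCommGroup H] [InnerProductSpace ℝ H]
    (V W : Submodule ℝ H) : ℝ :=
  ⨅ v : {v : V // v ≠ 0}, ⨆ w : {w : W // w ≠ 0},
    ⟪((v : V) : H), ((w : W) : H)⟫ / (‖((v : V) : H)‖ * ‖((w : W) : H)‖)

section Aux

variable {H : Type*} [NormedAddCommGroup H] [InnerProductSpace ℝ H] [CompleteSpace H]

lemma nonempty_ne_zero {W : Submodule ℝ H} (hW : W ≠ ⊥) : Nonempty {w : W // w ≠ 0} := by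
  haveI : Nontrivial W := Submodule.nontrivial_iff_ne_bot.mpr hW
  obtain ⟨w, hw⟩ := exists_ne (0 : W)
  exact ⟨⟨w, hw⟩⟩

lemma sup_eq_proj (W : Submodule ℝ H) [CompleteSpace W] (hW : W ≠ ⊥)
    (v : H) (hv : v ≠ 0) :
    (⨆ w : {w : W // w ≠ 0}, ⟪v, ((w : W) : H)⟫ / (‖v‖ * ‖((w : W) : H)‖))
      = ‖(W.orthogonalProjectionOnto v : H)‖ / ‖v‖ := by
  haveI := nonempty_ne_zero hW
  have hv0 : (0 : ℝ) < ‖v‖ := norm_pos_iff.mpr hv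
  set p : H := (W.orthogonalProjectionOnto v : H) with hp
  have hinner : ∀ w : W, ⟪v, (w : H)⟫ = ⟪p, (w : H)⟫ := by
    intro w
    have h1 : v - p ∈ Wᗮ := Submodule.sub_starProjection_mem_orthogonal v
    have h2 : ⟪(w : H), v - p⟫ = 0 := (Submodule.mem_orthogonal _ _).mp h1 w w.2
    have h3 : ⟪v - p, (w : H)⟫ = 0 := by rwa [real_inner_comm] at h2
    rw [inner_sub_left] at h3
    linarith
  have hb : ∀ w : {w : W // w ≠ 0},
      ⟪v, ((w : W) : H)⟫ / (‖v‖ * ‖((w : W) : H)‖) ≤ ‖p‖ / ‖v‖ := by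
    intro ⟨w, hw⟩
    have hw0 : (0 : ℝ) < ‖(w : H)‖ := by
      simpa [norm_pos_iff] using (fun h => hw (by exact_mod_cast Subtype.ext (by exact_mod_cast h)))
    have hcs : ⟪p, (w : H)⟫ ≤ ‖p‖ * ‖(w : H)‖ := real_inner_le_norm _ _
    calc ⟪v, (w : H)⟫ / (‖v‖ * ‖(w : H)‖)
        = ⟪p, (w : H)⟫ / (‖v‖ * ‖(w : H)‖) := by rw [hinner]
      _ ≤ (‖p‖ * ‖(w : H)‖) / (‖v‖ * ‖(w : H)‖) := by
          apply div_le_div_of_nonneg_right hcs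
            -- positivity of denominator
          positivity
      _ = ‖p‖ / ‖v‖ := by
          rw [mul_comm ‖p‖ _, mul_comm ‖v‖ _, mul_div_mul_left _ _ (ne_of_gt hw0)]

  refine le_antisymm (ciSup_le hb) ?_
  by_cases hp0 : p = 0
  · have : ∀ w : {w : W // w ≠ 0},
        ⟪v, ((w : W) : H)⟫ / (‖v‖ * ‖((w : W) : H)‖) = 0 := by
      intro w
      rw [hinner, hp0, inner_zero_left, zero_div]
    rw [iSup_congr this, ciSup_const, hp0, norm_zero, zero_div]
  · have hpW : p ∈ W := (W.orthogonalProjectionOnto v).2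
    have hp0' : (⟨p, hpW⟩ : W) ≠ 0 := by
      simp only [ne_eq, Submodule.mk_eq_zero]
      exact hp0
    have hpn : (0 : ℝ) < ‖p‖ := norm_pos_iff.mpr hp0
    have hval : ⟪v, p⟫ / (‖v‖ * ‖p‖) = ‖p‖ / ‖v‖ := by
      have : ⟪v, p⟫ = ‖p‖ ^ 2 := by
        rw [hinner ⟨p, hpW⟩, real_inner_self_eq_norm_sq]
      rw [this]
      field_simp
    have hbdd : BddAbove (Set.range fun w : {w : W // w ≠ 0} =>
        ⟪v, ((w : W) : H)⟫ / (‖v‖ * ‖((w : W) : H)‖)) :=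
      ⟨‖p‖ / ‖v‖, Set.forall_mem_range.mpr hb⟩
    have := le_ciSup hbdd (⟨⟨p, hpW⟩, hp0'⟩ : {w : W // w ≠ 0})
    simpa [hval] using this

lemma range_id_sub_eq_ker (Q : H →L[ℝ] H) (hQ : Q.comp Q = Q) :
    LinearMap.range ((ContinuousLinearMap.id ℝ H - Q : H →L[ℝ] H) : H →ₗ[ℝ] H) = LinearMap.ker (Q : H →ₗ[ℝ] H) := by
  ext x
  constructor
  · rintro ⟨y, rfl⟩
    have := congrArg (fun f : H →L[ℝ] H => f y) hQ
    simp only [ContinuousLinearMap.comp_apply] at this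
    simp [LinearMap.mem_ker, this]
  · intro hx
    exact ⟨x, by simp [LinearMap.mem_ker.mp hx]⟩

lemma key (V W : Submodule ℝ H) (hWc : IsClosed (W : Set H))
    (hV : V ≠ ⊥) (hW : W ≠ ⊥)
    (Q : H →L[ℝ] H) (hQ : Q.comp Q = Q)
    (hQran : LinearMap.range (Q : H →ₗ[ℝ] H) = V)
    (hker : LinearMap.ker (Q : H →ₗ[ℝ] H) = Wᗮ) :
    infSupConst V W = ‖Q‖⁻¹ := by
  haveI : CompleteSpace W := hWc.completeSpace_coe
  haveI hne : Nonempty {v : V // v ≠ 0} := nonempty_ne_zero hV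
  set P := W.orthogonalProjectionOnto with hP
  -- Q fixes V
  have hQfix : ∀ v ∈ V, Q v = v := by
    intro v hv
    rw [← hQran] at hv
    obtain ⟨y, rfl⟩ := hv
    have := congrArg (fun f : H →L[ℝ] H => f y) hQ
    simpa using this
  -- Q kills Wᗮ and hence Q (P x) = Q x
  have hQP : ∀ x : H, Q ((P x : W) : H) = Q x := by
    intro x
    have h1 : x - (P x : H) ∈ Wᗮ := Submodule.sub_starProjection_mem_orthogonal x
    rw [← hker, LinearMap.mem_ker] at h1
    have h2 : Q x - Q ((P x : W) : H) = 0 := by rw [← map_sub]; exact h1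
    rw [← sub_eq_zero]
    rw [← neg_sub, h2, neg_zero]
  -- norm of Q is positive
  have hQpos : (0:ℝ) < ‖Q‖ := by
    obtain ⟨v, hvV, hv0⟩ := Submodule.ne_bot_iff V |>.mp hV
    have h1 : ‖v‖ ≤ ‖Q‖ * ‖v‖ := by
      conv_lhs => rw [← hQfix v hvV]
      exact Q.le_opNorm v
    nlinarith [norm_pos_iff.mpr hv0, Q.opNorm_nonneg]
  -- rewrite infSupConst
  have hrw : infSupConst V W
      = ⨅ v : {v : V // v ≠ 0}, ‖((P ((v : V) : H) : W) : H)‖ / ‖((v : V) : H)‖ := by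
    unfold infSupConst
    apply iInf_congr
    intro v
    have hv0 : ((v : V) : H) ≠ 0 := by
      intro h
      exact v.2 (by simp only [ne_eq, ← Submodule.coe_eq_zero] at *; exact h)
    exact sup_eq_proj W hW _ hv0
  -- lower bound
  have hlow : ∀ v : {v : V // v ≠ 0},
      ‖Q‖⁻¹ ≤ ‖((P ((v : V) : H) : W) : H)‖ / ‖((v : V) : H)‖ := by
    intro v
    have hv0 : ((v : V) : H) ≠ 0 := by
      intro h
      exact v.2 (by simp only [ne_eq, ← Submodule.coe_eq_zero] at *; exact h)
    have hvpos : (0:ℝ) < ‖((v : V) : H)‖ := norm_pos_iff.mpr hv0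
    have h1 : ‖((v : V) : H)‖ ≤ ‖Q‖ * ‖((P ((v : V) : H) : W) : H)‖ := by
      have h2 : Q ((P ((v : V) : H) : W) : H) = ((v : V) : H) := by
        rw [hQP]; exact hQfix _ (v : V).2
      conv_lhs => rw [← h2]
      exact Q.le_opNorm _
    rw [le_div_iff₀ hvpos, inv_mul_eq_div, div_le_iff₀ hQpos]
    linarith
  have hm_lb : ‖Q‖⁻¹ ≤ ⨅ v : {v : V // v ≠ 0}, ‖((P ((v : V) : H) : W) : H)‖ / ‖((v : V) : H)‖ :=
    le_ciInf hlow
  set m := ⨅ v : {v : V // v ≠ 0}, ‖((P ((v : V) : H) : W) : H)‖ / ‖((v : V) : H)‖ with hm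
  have hmpos : 0 < m := lt_of_lt_of_le (inv_pos.mpr hQpos) hm_lb
  -- upper bound: ‖Q‖ ≤ m⁻¹
  have hbdd : BddBelow (Set.range fun v : {v : V // v ≠ 0} =>
      ‖((P ((v : V) : H) : W) : H)‖ / ‖((v : V) : H)‖) :=
    ⟨‖Q‖⁻¹, Set.forall_mem_range.mpr hlow⟩
  have hup : ‖Q‖ ≤ m⁻¹ := by
    apply Q.opNorm_le_bound (by positivity)
    intro x
    by_cases hx : Q x = 0
    · rw [hx, norm_zero]; positivity
    · have hQxV : Q x ∈ V := by rw [← hQran]; exact ⟨x, rfl⟩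
      have hv' : (⟨Q x, hQxV⟩ : V) ≠ 0 := by
        simp only [ne_eq, Submodule.mk_eq_zero]; exact hx
      have h1 : m ≤ ‖((P (Q x) : W) : H)‖ / ‖Q x‖ :=
        ciInf_le hbdd (⟨⟨Q x, hQxV⟩, hv'⟩ : {v : V // v ≠ 0})
      have hPQx : (P (Q x) : H) = (P x : H) := by
        have h2 : x - Q x ∈ Wᗮ := by
          rw [← hker, LinearMap.mem_ker, map_sub]
          have := congrArg (fun f : H →L[ℝ] H => f x) hQ
          simp only [ContinuousLinearMap.comp_apply] at this
          rw [ContinuousLinearMap.coe_coe, this, sub_self]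
        have h3 : P (x - Q x) = 0 :=
          Submodule.orthogonalProjectionOnto_apply_of_mem_orthogonal h2
        have h4 : P x - P (Q x) = 0 := by rw [← map_sub]; exact h3
        have h5 : P x = P (Q x) := by rwa [sub_eq_zero] at h4
        rw [h5]
      have hPle : ‖((P x : W) : H)‖ ≤ ‖x‖ := by
        calc ‖((P x : W) : H)‖ = ‖P x‖ := rfl
          _ ≤ ‖P‖ * ‖x‖ := P.le_opNorm x
          _ ≤ 1 * ‖x‖ := by
              apply mul_le_mul_of_nonneg_right (W.orthogonalProjectionOnto_norm_le) (norm_nonneg x)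
          _ = ‖x‖ := one_mul _
      have hQxpos : (0:ℝ) < ‖Q x‖ := norm_pos_iff.mpr hx
      have h6 : m * ‖Q x‖ ≤ ‖((P x : W) : H)‖ := by
        rw [← hPQx]
        calc m * ‖Q x‖ ≤ (‖((P (Q x) : W) : H)‖ / ‖Q x‖) * ‖Q x‖ := by
              apply mul_le_mul_of_nonneg_right h1 (le_of_lt hQxpos)
          _ = ‖((P (Q x) : W) : H)‖ := by field_simp
      calc ‖Q x‖ = m⁻¹ * (m * ‖Q x‖) := by field_simp
        _ ≤ m⁻¹ * ‖((P x : W) : H)‖ := by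
            apply mul_le_mul_of_nonneg_left h6 (by positivity)
        _ ≤ m⁻¹ * ‖x‖ := mul_le_mul_of_nonneg_left hPle (by positivity)
  have hm_ub : m ≤ ‖Q‖⁻¹ := by
    rw [← inv_inv m]
    exact inv_anti₀ hQpos hup
  rw [hrw]
  exact le_antisymm hm_ub hm_lb


lemma ker_adjoint_eq (Q : H →L[ℝ] H) (V : Submodule ℝ H) (hQran : LinearMap.range (Q : H →ₗ[ℝ] H) = V) :
    LinearMap.ker ((ContinuousLinearMap.adjoint Q : H →L[ℝ] H) : H →ₗ[ℝ] H) = Vᗮ := by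
  ext x
  simp only [LinearMap.mem_ker, Submodule.mem_orthogonal, ContinuousLinearMap.coe_coe]
  constructor
  · intro h u hu
    rw [← hQran] at hu
    obtain ⟨y, rfl⟩ := hu
    rw [ContinuousLinearMap.coe_coe, ← Q.adjoint_inner_right y x, h, inner_zero_right]
  · intro h
    have h1 : ∀ y : H, ⟪y, ContinuousLinearMap.adjoint Q x⟫ = 0 := by
      intro y
      rw [Q.adjoint_inner_right y x]
      have : Q y ∈ V := by rw [← hQran]; exact ⟨y, rfl⟩
      exact h _ this
    have := h1 (ContinuousLinearMap.adjoint Q x)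
    rwa [inner_self_eq_zero] at this

lemma range_adjoint_eq (Q : H →L[ℝ] H) (W : Submodule ℝ H) [CompleteSpace W]
    (hQ : Q.comp Q = Q)
    (hker : LinearMap.ker (Q : H →ₗ[ℝ] H) = Wᗮ) :
    LinearMap.range ((ContinuousLinearMap.adjoint Q : H →L[ℝ] H) : H →ₗ[ℝ] H) = W := by
  apply le_antisymm
  · rintro _ ⟨z, rfl⟩
    rw [← Submodule.orthogonal_orthogonal W]
    intro u hu
    rw [← hker, LinearMap.mem_ker, ContinuousLinearMap.coe_coe] at hu
    rw [ContinuousLinearMap.coe_coe, Q.adjoint_inner_right u z, hu, inner_zero_left]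
  · intro w hw
    refine ⟨w, ?_⟩
    apply ext_inner_right ℝ
    intro y
    rw [ContinuousLinearMap.coe_coe, Q.adjoint_inner_left]
    have h1 : Q y - y ∈ Wᗮ := by
      have h2 : y - Q y ∈ Wᗮ := by
        rw [← hker, LinearMap.mem_ker, map_sub]
        have := congrArg (fun f : H →L[ℝ] H => f y) hQ
        simp only [ContinuousLinearMap.comp_apply] at this
        rw [ContinuousLinearMap.coe_coe, this, sub_self]
      simpa using Wᗮ.neg_mem h2
    have h3 : ⟪w, Q y - y⟫ = 0 := (Submodule.mem_orthogonal _ _).mp h1 w hw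
    rw [inner_sub_right] at h3
    linarith

end Aux


theorem stmt2 {H : Type*} [NormedAddCommGroup H] [InnerProductSpace ℝ H] [CompleteSpace H]
    (V W : Submodule ℝ H) (hVc : IsClosed (V : Set H)) (hWc : IsClosed (W : Set H))
    (hV : V ≠ ⊥) (hW : W ≠ ⊥)
    (Q : H →L[ℝ] H) (hQ : Q.comp Q = Q)
    (hQran : LinearMap.range (Q : H →ₗ[ℝ] H) = V)
    (hQcoran : LinearMap.range ((ContinuousLinearMap.id ℝ H - Q : H →L[ℝ] H) : H →ₗ[ℝ] H) = Wᗮ) :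
    0 < infSupConst V W ∧ infSupConst V W = infSupConst W V ∧
      infSupConst V W = ‖Q‖⁻¹ := by
  haveI : CompleteSpace W := hWc.completeSpace_coe
  haveI : CompleteSpace V := hVc.completeSpace_coe
  have hker : LinearMap.ker (Q : H →ₗ[ℝ] H) = Wᗮ := (range_id_sub_eq_ker Q hQ).symm.trans hQcoran
  have h1 : infSupConst V W = ‖Q‖⁻¹ := key V W hWc hV hW Q hQ hQran hker
  set Qs := ContinuousLinearMap.adjoint Q with hQs
  have hQs2 : Qs.comp Qs = Qs := by
    rw [hQs, ← ContinuousLinearMap.adjoint_comp, hQ]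
  have hranQs : LinearMap.range (Qs : H →ₗ[ℝ] H) = W := range_adjoint_eq Q W hQ hker
  have hkerQs : LinearMap.ker (Qs : H →ₗ[ℝ] H) = Vᗮ := ker_adjoint_eq Q V hQran
  have h2 : infSupConst W V = ‖Qs‖⁻¹ := key W V hVc hW hV Qs hQs2 hranQs hkerQs
  have hnorm : ‖Qs‖ = ‖Q‖ :=
    (ContinuousLinearMap.adjoint : (H →L[ℝ] H) ≃ₗᵢ⋆[ℝ] (H →L[ℝ] H)).norm_map Q
  have hQpos : (0:ℝ) < ‖Q‖ := by
    obtain ⟨v, hvV, hv0⟩ := Submodule.ne_bot_iff V |>.mp hV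
    have hvQ : Q v = v := by
      rw [← hQran] at hvV
      obtain ⟨y, rfl⟩ := hvV
      have := congrArg (fun f : H →L[ℝ] H => f y) hQ
      simpa using this
    have hle : ‖v‖ ≤ ‖Q‖ * ‖v‖ := by
      conv_lhs => rw [← hvQ]
      exact Q.le_opNorm v
    nlinarith [norm_pos_iff.mpr hv0, Q.opNorm_nonneg]
  refine ⟨by rw [h1]; positivity, ?_, h1⟩
  rw [h1, h2, hnorm]
end

section
/- Let H be a real Hilbert space and V, Ṽ closed subspaces of H with V ≠ {0} and Ṽ ≠ {0}. Suppose both the inf-sup constant of the pair (V, Ṽ) and the inf-sup constant of the pair (Ṽ, V) are strictly positive. Then these two inf-sup constants are equal, say with common value β > 0, and there exists a bounded linear projector Q : H → H (Q∘Q = Q) with range Q = V, range(I − Q) = Ṽ^⊥, and ‖Q‖ = β^{-1}. -/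
open scoped RealInnerProductSpace

section aux
set_option linter.unusedSectionVars false
variable {H : Type*} [NormedAddCommGroup H] [InnerProductSpace ℝ H] [CompleteSpace H]
variable (V W : Submodule ℝ H)

lemma nonempty_ne_bot (hV : V ≠ ⊥) : Nonempty {v : V // v ≠ 0} := by
  obtain ⟨x, hx, hx0⟩ := Submodule.exists_mem_ne_zero_of_ne_bot hV
  exact ⟨⟨⟨x, hx⟩, by simpa using hx0⟩⟩

lemma sup_eq [Submodule.HasOrthogonalProjection W] (hW : W ≠ ⊥) (v : V) (hv : v ≠ 0) :
    (⨆ w : {w : W // w ≠ 0},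
        ⟪(v : H), ((w : W) : H)⟫ / (‖(v : H)‖ * ‖((w : W) : H)‖))
      = ‖(Submodule.orthogonalProjectionOnto W (v : H) : H)‖ / ‖(v : H)‖ := by
  have hvn : (0:ℝ) < ‖(v:H)‖ := by
    simp only [norm_pos_iff]
    exact_mod_cast (Submodule.coe_eq_zero (p := V)).not.2 hv
  have hne := nonempty_ne_bot W hW
  set p : H := (Submodule.orthogonalProjectionOnto W (v : H) : H) with hp
  have key : ∀ w : W, ⟪(v:H), (w:H)⟫ = ⟪p, (w:H)⟫ := by
    intro w
    have : ⟪(v : H) - ((Submodule.orthogonalProjectionOnto W (v : H) : W) : H), (w : H)⟫ = 0 :=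
      Submodule.starProjection_inner_eq_zero (K := W) (v : H) (w : H) w.2
    rw [inner_sub_left] at this
    linarith
  have hub : ∀ w : {w : W // w ≠ 0},
      ⟪(v:H), ((w:W):H)⟫ / (‖(v:H)‖ * ‖((w:W):H)‖) ≤ ‖p‖ / ‖(v:H)‖ := by
    intro w
    rw [key]
    have hcs := real_inner_le_norm p ((w:W):H)
    have hwpos : (0:ℝ) < ‖((w:W):H)‖ := by
      simp only [norm_pos_iff]
      exact_mod_cast (Submodule.coe_eq_zero (p := W)).not.2 w.2
    rw [div_le_div_iff₀ (by positivity) hvn]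
    nlinarith [hcs, hvn, hwpos, norm_nonneg p]
  by_cases hp0 : p = 0
  · rw [hp0, norm_zero, zero_div]
    have : ∀ w : {w : W // w ≠ 0},
        ⟪(v:H), ((w:W):H)⟫ / (‖(v:H)‖ * ‖((w:W):H)‖) = 0 := by
      intro w; rw [key, hp0]; simp
    rw [iSup_congr this]; exact ciSup_const
  · apply le_antisymm (ciSup_le hub)
    have hpW : p ∈ W := (Submodule.orthogonalProjectionOnto W (v:H)).2
    have hpn : Submodule.orthogonalProjectionOnto W (v:H) ≠ 0 := by
      intro h; apply hp0; rw [hp, h]; simp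
    have hbdd : BddAbove (Set.range fun w : {w : W // w ≠ 0} =>
        ⟪(v:H), ((w:W):H)⟫ / (‖(v:H)‖ * ‖((w:W):H)‖)) := by
      refine ⟨‖p‖ / ‖(v:H)‖, ?_⟩
      rintro x ⟨w, rfl⟩; exact hub w
    refine le_ciSup_of_le hbdd ⟨⟨p, hpW⟩, ?_⟩ ?_
    · intro h
      exact hp0 (by simpa using congrArg Subtype.val h)
    · have hk : ⟪(v:H), p⟫ = ⟪p, p⟫ := key ⟨p, hpW⟩
      have hpne : ‖p‖ ≠ 0 := by simpa using hp0
      rw [show (((⟨p,hpW⟩ : W) : H)) = p from rfl, hk,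
        real_inner_self_eq_norm_mul_norm, mul_comm ‖(v:H)‖,
        mul_div_mul_left _ _ hpne]

end aux

section aux2
set_option linter.unusedSectionVars false
set_option maxHeartbeats 1000000
set_option synthInstance.maxHeartbeats 200000
variable {H : Type*} [NormedAddCommGroup H] [InnerProductSpace ℝ H] [CompleteSpace H]
variable (V W : Submodule ℝ H)

lemma infSup_eq [Submodule.HasOrthogonalProjection W] (hW : W ≠ ⊥) :
    infSupConst V W = ⨅ v : {v : V // v ≠ 0},
      ‖(Submodule.orthogonalProjectionOnto W (((v : V)) : H) : H)‖ / ‖(((v : V)) : H)‖ := by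
  unfold infSupConst
  exact iInf_congr fun v => sup_eq V W hW (v : V) v.2

lemma bddBelow_aux [Submodule.HasOrthogonalProjection W] : BddBelow (Set.range fun v : {v : V // v ≠ 0} =>
    ‖(Submodule.orthogonalProjectionOnto W (((v : V)) : H) : H)‖ / ‖(((v : V)) : H)‖) := by
  refine ⟨0, ?_⟩
  rintro x ⟨v, rfl⟩
  positivity

lemma lower_bound [Submodule.HasOrthogonalProjection W] (hW : W ≠ ⊥) :
    ∀ v ∈ V, infSupConst V W * ‖v‖ ≤ ‖(Submodule.orthogonalProjectionOnto W v : H)‖ := by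
  intro v hv
  by_cases h0 : v = 0
  · simp [h0]
  have := ciInf_le (bddBelow_aux V W) (⟨⟨v, hv⟩, by simpa using h0⟩ : {v : V // v ≠ 0})
  rw [← infSup_eq V W hW] at this
  have hvn : (0:ℝ) < ‖v‖ := norm_pos_iff.2 h0
  rw [le_div_iff₀ hvn] at this
  simpa using this

/-- The map `P_W ∘ incl : V → W`. -/
noncomputable def projVW [Submodule.HasOrthogonalProjection W] : V →L[ℝ] W :=
  (Submodule.orthogonalProjectionOnto W).comp V.subtypeL

lemma projVW_apply [Submodule.HasOrthogonalProjection W] (v : V) :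
    projVW V W v = Submodule.orthogonalProjectionOnto W (v : H) := rfl

lemma projVW_ker [Submodule.HasOrthogonalProjection W] (hW : W ≠ ⊥)
    (h1 : 0 < infSupConst V W) : LinearMap.ker (projVW V W : V →ₗ[ℝ] W) = ⊥ := by
  rw [Submodule.eq_bot_iff]
  intro v hv
  replace hv : Submodule.orthogonalProjectionOnto W ((v:V) : H) = 0 := hv
  have := lower_bound V W hW (v : H) v.2
  rw [hv] at this
  simp only [Submodule.coe_zero, norm_zero] at this
  have : ‖(v : H)‖ ≤ 0 := by nlinarith
  have : (v : H) = 0 := by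
    simpa using le_antisymm this (norm_nonneg _)
  exact_mod_cast this

lemma projVW_antilip [Submodule.HasOrthogonalProjection W] (hW : W ≠ ⊥)
    (h1 : 0 < infSupConst V W) :
    AntilipschitzWith (⟨(infSupConst V W)⁻¹, by positivity⟩ : NNReal) (projVW V W) := by
  apply (projVW V W).antilipschitz_of_bound
  intro v
  have h5 := lower_bound V W hW (v : H) v.2
  have h3 : ‖(v:H)‖ ≤ (infSupConst V W)⁻¹ * ‖(Submodule.orthogonalProjectionOnto W ((v:V) : H) : H)‖ :=
    (le_inv_mul_iff₀ h1).2 h5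
  exact_mod_cast h3

lemma projVW_range [Submodule.HasOrthogonalProjection V] [Submodule.HasOrthogonalProjection W]
    (hVc : IsClosed (V : Set H)) (hWc : IsClosed (W : Set H)) (hW : W ≠ ⊥) (hV : V ≠ ⊥)
    (h1 : 0 < infSupConst V W) (h2 : 0 < infSupConst W V) :
    LinearMap.range (projVW V W : V →ₗ[ℝ] W) = ⊤ := by
  haveI : CompleteSpace V := hVc.completeSpace_coe
  haveI : CompleteSpace W := hWc.completeSpace_coe
  set R := LinearMap.range (projVW V W : V →ₗ[ℝ] W) with hR
  have hclosed : IsClosed (R : Set W) := by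
    have := (projVW_antilip V W hW h1).isClosed_range (projVW V W).uniformContinuous
    simpa [hR, LinearMap.coe_range] using this
  haveI : CompleteSpace R := hclosed.completeSpace_coe
  rw [← Submodule.orthogonal_eq_bot_iff]
  rw [Submodule.eq_bot_iff]
  intro w hw
  -- w is orthogonal to all P_W v for v ∈ V, hence to all v ∈ V
  have key : ∀ v : V, ⟪(v : H), (w : H)⟫ = 0 := by
    intro v
    have h0 : ⟪(projVW V W v : W), w⟫ = 0 :=
      (Submodule.mem_orthogonal R w).1 hw _ ⟨v, rfl⟩
    rw [projVW_apply] at h0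
    have h0' := Submodule.inner_orthogonalProjectionOnto_eq_of_mem_right (K := W) w (((v : V)) : H)
    rw [h0'] at h0
    exact h0
  have h3 := key (Submodule.orthogonalProjectionOnto V (w : H))
  have h3' := Submodule.inner_orthogonalProjectionOnto_eq_of_mem_left (K := V)
    (Submodule.orthogonalProjectionOnto V ((w : W) : H)) ((w : W) : H)
  rw [h3] at h3'
  have h4 : Submodule.orthogonalProjectionOnto V ((w : W) : H) = 0 :=
    inner_self_eq_zero (𝕜 := ℝ).1 h3'
  have h5 := lower_bound W V hV ((w : W) : H) (w : W).2
  rw [h4] at h5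
  simp only [Submodule.coe_zero, norm_zero] at h5
  have : ‖((w:W) : H)‖ ≤ 0 := by nlinarith
  have : ((w:W) : H) = 0 := by simpa using le_antisymm this (norm_nonneg _)
  exact_mod_cast this

end aux2

section aux3
set_option linter.unusedSectionVars false
set_option maxHeartbeats 1000000
set_option synthInstance.maxHeartbeats 200000
variable {H : Type*} [NormedAddCommGroup H] [InnerProductSpace ℝ H] [CompleteSpace H]
variable (V W : Submodule ℝ H)

lemma half (hVc : IsClosed (V : Set H)) (hWc : IsClosed (W : Set H))
    (hV : V ≠ ⊥) (hW : W ≠ ⊥)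
    (h1 : 0 < infSupConst V W) (h2 : 0 < infSupConst W V) :
    infSupConst V W ≤ infSupConst W V := by
  haveI : CompleteSpace V := hVc.completeSpace_coe
  haveI : CompleteSpace W := hWc.completeSpace_coe
  haveI := nonempty_ne_bot W hW
  set E := ContinuousLinearEquiv.ofBijective (projVW V W) (projVW_ker V W hW h1)
    (projVW_range V W hVc hWc hW hV h1 h2) with hE
  have hEapp : ∀ x : V, E x = projVW V W x := fun x => by
    rw [hE, ContinuousLinearEquiv.coeFn_ofBijective]
  rw [infSup_eq W V hV]
  apply le_ciInf
  intro w
  set v : V := E.symm (w : W) with hv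
  have hEv : projVW V W v = (w : W) := by
    rw [← hEapp]; exact E.apply_symm_apply _
  have hPv : (Submodule.orthogonalProjectionOnto W ((v : V) : H) : W) = (w : W) := hEv
  have hv0 : ((v : V) : H) ≠ 0 := by
    intro h
    have hv0' : v = 0 := by exact_mod_cast h
    apply w.2
    rw [← hEv, hv0', map_zero]
  have hwn : (0:ℝ) < ‖((w : W) : H)‖ := by
    simp only [norm_pos_iff]
    exact_mod_cast (Submodule.coe_eq_zero (p := W)).not.2 w.2
  have hvn : (0:ℝ) < ‖((v : V) : H)‖ := norm_pos_iff.2 hv0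
  -- inner product identity : ⟪w, v⟫ = ‖w‖²
  have hinner : ⟪(((w : W)) : H), ((v : V) : H)⟫ = ‖(((w : W)) : H)‖ * ‖(((w : W)) : H)‖ := by
    have := Submodule.inner_orthogonalProjectionOnto_eq_of_mem_left (K := W) (w : W) ((v : V) : H)
    rw [hPv, real_inner_self_eq_norm_mul_norm] at this
    rw [← this, Submodule.coe_norm]
  -- Cauchy-Schwarz via projection onto V
  have hCS : ⟪((v : V) : H), (((w : W)) : H)⟫
      ≤ ‖((v : V) : H)‖ * ‖(Submodule.orthogonalProjectionOnto V (((w : W)) : H) : H)‖ := by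
    have h5 := Submodule.inner_orthogonalProjectionOnto_eq_of_mem_left (K := V) (v : V)
      (((w : W)) : H)
    have h6 := real_inner_le_norm (v : V) (Submodule.orthogonalProjectionOnto V (((w : W)) : H))
    rw [h5] at h6
    simpa [Submodule.coe_norm] using h6
  have hb := lower_bound V W hW ((v : V) : H) (v : V).2
  rw [show ((Submodule.orthogonalProjectionOnto W ((v : V) : H) : W) : H) = (((w : W)) : H) from
    congrArg Subtype.val hPv] at hb
  rw [le_div_iff₀ hwn]
  rw [real_inner_comm] at hinner
  nlinarith [mul_le_mul_of_nonneg_left hCS h1.le,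
    mul_le_mul_of_nonneg_right hb (norm_nonneg (Submodule.orthogonalProjectionOnto V (((w : W)) : H) : H))]

end aux3


set_option maxHeartbeats 1000000 in
set_option synthInstance.maxHeartbeats 200000 in
theorem stmt3 {H : Type*} [NormedAddCommGroup H] [InnerProductSpace ℝ H] [CompleteSpace H]
    (V W : Submodule ℝ H) (hVc : IsClosed (V : Set H)) (hWc : IsClosed (W : Set H))
    (hV : V ≠ ⊥) (hW : W ≠ ⊥)
    (h1 : 0 < infSupConst V W) (h2 : 0 < infSupConst W V) :
    infSupConst V W = infSupConst W V ∧
      ∃ Q : H →L[ℝ] H, Q.comp Q = Q ∧ LinearMap.range (Q : H →ₗ[ℝ] H) = V ∧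
        LinearMap.range ((ContinuousLinearMap.id ℝ H - Q : H →L[ℝ] H) : H →ₗ[ℝ] H) = Wᗮ ∧
        ‖Q‖ = (infSupConst V W)⁻¹ := by
  haveI : CompleteSpace V := hVc.completeSpace_coe
  haveI : CompleteSpace W := hWc.completeSpace_coe
  haveI := nonempty_ne_bot V hV
  refine ⟨le_antisymm (half V W hVc hWc hV hW h1 h2) (half W V hWc hVc hW hV h2 h1), ?_⟩
  set b := infSupConst V W with hb
  set E := ContinuousLinearEquiv.ofBijective (projVW V W) (projVW_ker V W hW h1)
    (projVW_range V W hVc hWc hW hV h1 h2) with hE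
  have hEapp : ∀ x : V, E x = projVW V W x := fun x => by
    rw [hE, ContinuousLinearEquiv.coeFn_ofBijective]
  set Q : H →L[ℝ] H :=
    V.subtypeL.comp ((E.symm : W →L[ℝ] V).comp (Submodule.orthogonalProjectionOnto W)) with hQ
  have hQapp : ∀ x : H, Q x = ((E.symm (Submodule.orthogonalProjectionOnto W x) : V) : H) :=
    fun x => rfl
  have hQmem : ∀ x : H, Q x ∈ V := fun x => (E.symm (Submodule.orthogonalProjectionOnto W x)).2
  have hQV : ∀ v : H, v ∈ V → Q v = v := by
    intro v hv
    have h3 : Submodule.orthogonalProjectionOnto W v = E ⟨v, hv⟩ := by rw [hEapp]; rfl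
    rw [hQapp, h3, E.symm_apply_apply]
  have hQWperp : ∀ x ∈ Wᗮ, Q x = 0 := by
    intro x hx
    rw [hQapp, Submodule.orthogonalProjectionOnto_apply_of_mem_orthogonal hx]
    simp
  have hPQ : ∀ x : H, Submodule.orthogonalProjectionOnto W (Q x) = Submodule.orthogonalProjectionOnto W x := by
    intro x
    rw [hQapp]
    have : Submodule.orthogonalProjectionOnto W ((E.symm (Submodule.orthogonalProjectionOnto W x) : V) : H)
        = projVW V W (E.symm (Submodule.orthogonalProjectionOnto W x)) := rfl
    rw [this, ← hEapp, E.apply_symm_apply]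
  have hsub : ∀ x : H, x - Q x ∈ Wᗮ := by
    intro x
    rw [← Submodule.orthogonalProjectionOnto_eq_zero_iff (K := W), map_sub, hPQ, sub_self]
  have hQPW : ∀ v : H, v ∈ V → Q ((Submodule.orthogonalProjectionOnto W v : W) : H) = v := by
    intro v hv
    have h4 := hQWperp _ (Submodule.sub_starProjection_mem_orthogonal (K := W) v :
        v - ((Submodule.orthogonalProjectionOnto W v : W) : H) ∈ Wᗮ)
    rw [map_sub, hQV v hv, sub_eq_zero] at h4
    exact h4.symm
  -- positivity of ‖Q‖
  obtain ⟨x0, hx0V, hx00⟩ := Submodule.exists_mem_ne_zero_of_ne_bot hV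
  have hQpos : (0:ℝ) < ‖Q‖ := by
    have h5 : ‖x0‖ ≤ ‖Q‖ * ‖x0‖ := by
      conv_lhs => rw [← hQV x0 hx0V]
      exact Q.le_opNorm x0
    have hx0n : (0:ℝ) < ‖x0‖ := norm_pos_iff.2 hx00
    nlinarith [norm_nonneg Q]
  refine ⟨Q, ?_, ?_, ?_, ?_⟩
  · ext x
    exact hQV (Q x) (hQmem x)
  · refine le_antisymm ?_ ?_
    · rintro x ⟨y, rfl⟩
      exact hQmem y
    · intro v hv
      exact ⟨v, hQV v hv⟩
  · refine le_antisymm ?_ ?_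
    · rintro x ⟨y, rfl⟩
      simpa using hsub y
    · intro x hx
      refine ⟨x, ?_⟩
      simp [hQWperp x hx]
  · -- norm equality
    refine le_antisymm ?_ ?_
    · apply Q.opNorm_le_bound (by positivity)
      intro x
      set v : V := E.symm (Submodule.orthogonalProjectionOnto W x) with hvdef
      have hb1 := lower_bound V W hW ((v : V) : H) (v : V).2
      have hPv : (Submodule.orthogonalProjectionOnto W ((v : V) : H) : H)
          = ((Submodule.orthogonalProjectionOnto W x : W) : H) := by
        refine congrArg Subtype.val ?_
        show projVW V W v = Submodule.orthogonalProjectionOnto W x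
        rw [← hEapp, hvdef, E.apply_symm_apply]
      rw [hPv] at hb1
      have hPx : ‖((Submodule.orthogonalProjectionOnto W x : W) : H)‖ ≤ ‖x‖ := by
        rw [← Submodule.coe_norm]
        calc ‖Submodule.orthogonalProjectionOnto W x‖ ≤ ‖Submodule.orthogonalProjectionOnto W‖ * ‖x‖ :=
              (Submodule.orthogonalProjectionOnto W).le_opNorm x
          _ ≤ 1 * ‖x‖ := by
              exact mul_le_mul_of_nonneg_right (Submodule.orthogonalProjectionOnto_norm_le (K := W)) (norm_nonneg x)
          _ = ‖x‖ := one_mul ‖x‖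
      rw [hQapp]
      have : b * ‖((v:V) : H)‖ ≤ ‖x‖ := le_trans hb1 hPx
      rw [← hvdef]
      nlinarith [norm_nonneg ((v : V) : H), mul_le_mul_of_nonneg_left this (inv_nonneg.2 h1.le),
        inv_mul_cancel₀ (ne_of_gt h1)]
    · have hclaim : ∀ v : {v : V // v ≠ 0},
          ‖Q‖⁻¹ ≤ ‖(Submodule.orthogonalProjectionOnto W (((v : V)) : H) : H)‖ / ‖(((v : V)) : H)‖ := by
        intro v
        have hvn : (0:ℝ) < ‖((v : V) : H)‖ := by
          simp only [norm_pos_iff]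
          exact_mod_cast (Submodule.coe_eq_zero (p := V)).not.2 v.2
        have h6 : ‖((v:V) : H)‖ ≤ ‖Q‖ * ‖(Submodule.orthogonalProjectionOnto W (((v:V)) : H) : H)‖ := by
          conv_lhs => rw [← hQPW ((v:V) : H) (v:V).2]
          exact Q.le_opNorm _
        rw [le_div_iff₀ hvn]
        have := mul_le_mul_of_nonneg_left h6 (inv_nonneg.2 hQpos.le)
        rw [← mul_assoc, inv_mul_cancel₀ (ne_of_gt hQpos), one_mul] at this
        linarith
      have h7 : ‖Q‖⁻¹ ≤ b := by
        rw [hb, infSup_eq V W hW]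
        exact le_ciInf hclaim
      exact inv_le_of_inv_le₀ hQpos h7
end

section
/- Let H be a real Hilbert space and V, Ṽ closed subspaces of H admitting a bounded linear projector Q : H → H with Q∘Q = Q, range Q = V and range(I − Q) = Ṽ^⊥. Then for every Riesz basis Φ = (φ_i)_{i∈I} for V there exists a unique family Φ̃ = (φ̃_i)_{i∈I} of elements of Ṽ with ⟨φ_i, φ̃_{i'}⟩_H = δ_{i i'} for all i, i' ∈ I, and this family Φ̃ is a Riesz basis for Ṽ. -/
set_option linter.unusedSectionVars false
set_option linter.unusedVariables false
set_option maxHeartbeats 1000000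

open scoped RealInnerProductSpace
open Filter

/-- `φ` is a Riesz basis for the closed subspace `U` with Riesz constants `A ≤ B`:
the closed linear span of `φ` is `U` and
`A·Σᵢ cᵢ² ≤ ‖Σᵢ cᵢ φᵢ‖² ≤ B·Σᵢ cᵢ²` for every finitely supported family `c`. -/
def IsRieszBasisWith {H : Type*} [NormedAddCommGroup H] [InnerProductSpace ℝ H]
    {ι : Type*} (φ : ι → H) (U : Submodule ℝ H) (A B : ℝ) : Prop :=
  (Submodule.span ℝ (Set.range φ)).topologicalClosure = U ∧
    ∀ c : ι →₀ ℝ,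
      A * ∑ i ∈ c.support, c i ^ 2 ≤ ‖∑ i ∈ c.support, c i • φ i‖ ^ 2 ∧
      ‖∑ i ∈ c.support, c i • φ i‖ ^ 2 ≤ B * ∑ i ∈ c.support, c i ^ 2

/-- `φ` is a Riesz basis for the closed subspace `U`. -/
def IsRieszBasis {H : Type*} [NormedAddCommGroup H] [InnerProductSpace ℝ H]
    {ι : Type*} (φ : ι → H) (U : Submodule ℝ H) : Prop :=
  ∃ A B : ℝ, 0 < A ∧ A ≤ B ∧ IsRieszBasisWith φ U A B

section Helpers
variable {H : Type*} [NormedAddCommGroup H] [InnerProductSpace ℝ H]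
variable {I : Type*} [DecidableEq I]

noncomputable def rbN2 (c : I →₀ ℝ) : ℝ := ∑ i ∈ c.support, c i ^ 2

lemma rbN2_nonneg (c : I →₀ ℝ) : 0 ≤ rbN2 c := Finset.sum_nonneg fun i _ => sq_nonneg _

lemma sum_sq_le_rbN2 (c : I →₀ ℝ) (S : Finset I) : ∑ i ∈ S, c i ^ 2 ≤ rbN2 c := by
  classical
  have h1 : ∑ i ∈ S, c i ^ 2 = ∑ i ∈ S ∩ c.support, c i ^ 2 := by
    refine (Finset.sum_subset Finset.inter_subset_left fun x hx hx' => ?_).symm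
    have : x ∉ c.support := fun h => hx' (Finset.mem_inter.2 ⟨hx, h⟩)
    simp [Finsupp.notMem_support_iff.1 this]
  rw [h1, rbN2]
  exact Finset.sum_le_sum_of_subset_of_nonneg Finset.inter_subset_right
    (fun i _ _ => sq_nonneg _)

lemma rbL_apply (φ : I → H) (c : I →₀ ℝ) :
    Finsupp.linearCombination ℝ φ c = ∑ i ∈ c.support, c i • φ i :=
  Finsupp.linearCombination_apply ℝ c

lemma inner_rbL_single {φ ψ : I → H}
    (hbi : ∀ i i', ⟪φ i, ψ i'⟫ = if i = i' then (1:ℝ) else 0)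
    (a : I →₀ ℝ) (i : I) : ⟪Finsupp.linearCombination ℝ φ a, ψ i⟫ = a i := by
  rw [rbL_apply, sum_inner]
  have : ∀ j ∈ a.support, ⟪a j • φ j, ψ i⟫ = if j = i then a j else 0 := by
    intro j _
    rw [real_inner_smul_left, hbi]
    split <;> simp
  rw [Finset.sum_congr rfl this, Finset.sum_ite_eq' a.support i a]
  by_cases h : i ∈ a.support
  · rw [if_pos h]
  · rw [if_neg h]; exact (Finsupp.notMem_support_iff.1 h).symm

lemma inner_rbL_comb {φ ψ : I → H}
    (hbi : ∀ i i', ⟪φ i, ψ i'⟫ = if i = i' then (1:ℝ) else 0)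
    (a c : I →₀ ℝ) :
    ⟪Finsupp.linearCombination ℝ φ a, ∑ i ∈ c.support, c i • ψ i⟫
      = ∑ j ∈ a.support, a j * c j := by
  rw [inner_sum]
  have : ∀ i ∈ c.support, ⟪Finsupp.linearCombination ℝ φ a, c i • ψ i⟫ = c i * a i := by
    intro i _
    rw [real_inner_smul_right, inner_rbL_single hbi]
  rw [Finset.sum_congr rfl this]
  have e1 : ∑ i ∈ c.support, c i * a i = ∑ i ∈ a.support ∪ c.support, c i * a i := by
    refine Finset.sum_subset Finset.subset_union_right fun x _ hx => ?_
    rw [Finsupp.notMem_support_iff.1 hx, zero_mul]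
  have e2 : ∑ j ∈ a.support, a j * c j = ∑ j ∈ a.support ∪ c.support, a j * c j := by
    refine Finset.sum_subset Finset.subset_union_left fun x _ hx => ?_
    rw [Finsupp.notMem_support_iff.1 hx, zero_mul]
  rw [e1, e2]
  exact Finset.sum_congr rfl fun x _ => mul_comm _ _

lemma tendsto_rbN2_of_cauchy (c : ℕ → I →₀ ℝ)
    (hC : ∀ ε > (0:ℝ), ∃ N, ∀ n ≥ N, ∀ m ≥ N, rbN2 (c n - c m) ≤ ε)
    (hP : ∀ i, Tendsto (fun n => c n i) atTop (nhds 0)) :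
    Tendsto (fun n => rbN2 (c n)) atTop (nhds 0) := by
  rw [Metric.tendsto_atTop]
  intro ε hε
  obtain ⟨N, hN⟩ := hC (ε/2) (by positivity)
  refine ⟨N, fun n hn => ?_⟩
  have key : rbN2 (c n) ≤ ε/2 := by
    have hg : Tendsto (fun m => ∑ j ∈ (c n).support, (c n j - c m j)^2) atTop
        (nhds (∑ j ∈ (c n).support, (c n j)^2)) := by
      refine tendsto_finset_sum _ fun j _ => ?_
      have h1 : Tendsto (fun m => c n j - c m j) atTop (nhds (c n j - 0)) :=
        tendsto_const_nhds.sub (hP j)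
      simpa using h1.pow 2
    refine le_of_tendsto hg ?_
    filter_upwards [eventually_ge_atTop N] with m hm
    calc ∑ j ∈ (c n).support, (c n j - c m j)^2
        = ∑ j ∈ (c n).support, ((c n - c m) j)^2 := by
          exact Finset.sum_congr rfl fun j _ => by rw [Finsupp.sub_apply]
      _ ≤ rbN2 (c n - c m) := sum_sq_le_rbN2 _ _
      _ ≤ ε/2 := hN n hn m hm
  have hd : dist (rbN2 (c n)) 0 = rbN2 (c n) := by
    rw [Real.dist_eq, sub_zero, abs_of_nonneg (rbN2_nonneg _)]
  rw [hd]; linarith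

lemma rb_lower {φ ψ : I → H} {B : ℝ} (hB : 0 < B)
    (hup : ∀ c : I →₀ ℝ, ‖∑ i ∈ c.support, c i • φ i‖^2 ≤ B * rbN2 c)
    (hbi : ∀ i i', ⟪φ i, ψ i'⟫ = if i = i' then (1:ℝ) else 0)
    (c : I →₀ ℝ) : B⁻¹ * rbN2 c ≤ ‖∑ i ∈ c.support, c i • ψ i‖^2 := by
  set X := ∑ i ∈ c.support, c i • ψ i with hX
  set L := Finsupp.linearCombination ℝ φ c with hL
  have hpair : ⟪L, X⟫ = rbN2 c := by
    rw [hX, hL, inner_rbL_comb hbi, rbN2]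
    exact Finset.sum_congr rfl fun j _ => (sq (c j)).symm
  have h1 : rbN2 c ≤ ‖L‖ * ‖X‖ := hpair ▸ real_inner_le_norm L X
  have h2 : ‖L‖^2 ≤ B * rbN2 c := by rw [hL, rbL_apply]; exact hup c
  have hn := rbN2_nonneg c
  rw [inv_mul_le_iff₀ hB]
  rcases eq_or_lt_of_le hn with h | h
  · nlinarith [sq_nonneg ‖X‖]
  · nlinarith [norm_nonneg X, norm_nonneg L, sq_nonneg (‖L‖*‖X‖)]

lemma norm_sq_le_of_dense_bound {V K : Submodule ℝ H}
    (hcl : K.topologicalClosure = V) {x : H} (hx : x ∈ V) {M : ℝ} (hM : 0 ≤ M)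
    (hb : ∀ y ∈ K, ⟪y, x⟫^2 ≤ M * ‖y‖^2) : ‖x‖^2 ≤ M := by
  have hx' : x ∈ closure (K : Set H) := by
    rw [← Submodule.topologicalClosure_coe, hcl]; exact hx
  obtain ⟨u, hu, hlim⟩ := mem_closure_iff_seq_limit.1 hx'
  have h1 : Tendsto (fun n => ⟪u n, x⟫^2) atTop (nhds (⟪x,x⟫^2)) :=
    (hlim.inner tendsto_const_nhds).pow 2
  have h2 : Tendsto (fun n => M * ‖u n‖^2) atTop (nhds (M * ‖x‖^2)) :=
    tendsto_const_nhds.mul (hlim.norm.pow 2)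
  have h3 : ⟪x,x⟫^2 ≤ M * ‖x‖^2 := le_of_tendsto_of_tendsto' h1 h2 fun n => hb (u n) (hu n)
  rw [real_inner_self_eq_norm_sq] at h3
  rcases eq_or_lt_of_le (sq_nonneg ‖x‖) with h | h
  · rw [← h]; exact hM
  · nlinarith

end Helpers

theorem stmt4 {H : Type*} [NormedAddCommGroup H] [InnerProductSpace ℝ H] [CompleteSpace H]
    {I : Type*} [Countable I] [DecidableEq I]
    (V W : Submodule ℝ H) (hVc : IsClosed (V : Set H)) (hWc : IsClosed (W : Set H))
    (Q : H →L[ℝ] H) (hQ : Q.comp Q = Q)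
    (hQran : LinearMap.range (Q : H →ₗ[ℝ] H) = V)
    (hQcoran : LinearMap.range ((ContinuousLinearMap.id ℝ H - Q : H →L[ℝ] H) : H →ₗ[ℝ] H) = Wᗮ)
    (φ : I → H) (hφ : IsRieszBasis φ V) :
    (∃! ψ : I → H, (∀ i, ψ i ∈ W) ∧
        ∀ i i' : I, ⟪φ i, ψ i'⟫ = if i = i' then (1 : ℝ) else 0) ∧
    ∀ ψ : I → H, ((∀ i, ψ i ∈ W) ∧
        ∀ i i' : I, ⟪φ i, ψ i'⟫ = if i = i' then (1 : ℝ) else 0) →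
      IsRieszBasis ψ W := by
  classical
  obtain ⟨A, B, hA, hAB, hspan, hbd⟩ := hφ
  have hB : 0 < B := lt_of_lt_of_le hA hAB
  set K := Submodule.span ℝ (Set.range φ) with hK
  have hlow : ∀ c : I →₀ ℝ, A * rbN2 c ≤ ‖Finsupp.linearCombination ℝ φ c‖^2 := fun c => by
    rw [rbL_apply]; exact (hbd c).1
  have hup : ∀ c : I →₀ ℝ, ‖Finsupp.linearCombination ℝ φ c‖^2 ≤ B * rbN2 c := fun c => by
    rw [rbL_apply]; exact (hbd c).2
  haveI : CompleteSpace W := hWc.completeSpace_coe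
  -- basic facts about Q
  have hQQ : ∀ x, Q (Q x) = Q x := fun x => congrArg (fun f : H →L[ℝ] H => f x) hQ
  have hQfix : ∀ v ∈ V, Q v = v := by
    intro v hv
    rw [← hQran] at hv
    obtain ⟨u, rfl⟩ := hv
    exact hQQ u
  have hQzero : ∀ y ∈ Wᗮ, Q y = 0 := by
    intro y hy
    rw [← hQcoran] at hy
    obtain ⟨u, rfl⟩ := hy
    simp only [ContinuousLinearMap.coe_coe, ContinuousLinearMap.sub_apply, ContinuousLinearMap.id_apply, map_sub]
    rw [hQQ, sub_self]
  have hadjW : ∀ x, Q.adjoint x ∈ W := by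
    intro x
    rw [← Submodule.orthogonal_orthogonal W]
    rw [Submodule.mem_orthogonal]
    intro y hy
    rw [real_inner_comm, ContinuousLinearMap.adjoint_inner_left, hQzero y hy, inner_zero_right]
  have hinnerW : ∀ v : H, ∀ w ∈ W, ⟪v, w⟫ = ⟪Q v, w⟫ := by
    intro v w hw
    have hmem : v - Q v ∈ Wᗮ := by
      rw [← hQcoran]
      exact ⟨v, rfl⟩
    have h0 : ⟪v - Q v, w⟫ = 0 := (Submodule.mem_orthogonal' W _).1 hmem w hw
    rw [inner_sub_left] at h0
    linarith
  have hφV : ∀ i, φ i ∈ V := fun i => by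
    rw [← hspan]
    exact Submodule.le_topologicalClosure _ (Submodule.subset_span ⟨i, rfl⟩)
  -- construction of the biorthogonal family inside V
  have hχex : ∀ i : I, ∃ p : H, p ∈ V ∧ ∀ j, ⟪φ j, p⟫ = if j = i then (1:ℝ) else 0 := by
    intro i
    set Ki := (Submodule.span ℝ (φ '' {j | j ≠ i})).topologicalClosure with hKi
    haveI : CompleteSpace Ki := (Submodule.isClosed_topologicalClosure _).completeSpace_coe
    set p := φ i - (Ki.orthogonalProjectionOnto (φ i) : H) with hp
    have hpo : p ∈ Kiᗮ := Submodule.sub_starProjection_mem_orthogonal (K := Ki) (φ i)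
    have hKiV : Ki ≤ V := by
      rw [← hspan]
      exact Submodule.topologicalClosure_mono
        (Submodule.span_mono (Set.image_subset_range φ _))
    have hpV : p ∈ V := V.sub_mem (hφV i) (hKiV (Ki.orthogonalProjectionOnto (φ i)).2)
    have hporth : ∀ j, j ≠ i → ⟪φ j, p⟫ = 0 := by
      intro j hj
      refine (Submodule.mem_orthogonal Ki p).1 hpo _ ?_
      exact Submodule.le_topologicalClosure _ (Submodule.subset_span ⟨j, hj, rfl⟩)
    have hpself : ⟪φ i, p⟫ = ‖p‖^2 := by
      have hdec : φ i = p + (Ki.orthogonalProjectionOnto (φ i) : H) := by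
        rw [hp, sub_add_cancel]
      conv_lhs => rw [hdec]
      rw [inner_add_left, real_inner_self_eq_norm_sq]
      have : ⟪(Ki.orthogonalProjectionOnto (φ i) : H), p⟫ = 0 :=
        (Submodule.mem_orthogonal Ki p).1 hpo _ (Ki.orthogonalProjectionOnto (φ i)).2
      rw [this, add_zero]
    have hpne : ‖p‖ ≠ 0 := by
      intro h0
      have hmem : φ i ∈ Ki := by
        have h1 : p = 0 := norm_eq_zero.1 h0
        have h2 : (Ki.orthogonalProjectionOnto (φ i) : H) = φ i := by
          rw [hp] at h1
          have := sub_eq_zero.1 h1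
          exact this.symm
        rw [← h2]
        exact (Ki.orthogonalProjectionOnto (φ i)).2
      have hsep : ∀ y ∈ Submodule.span ℝ (φ '' {j | j ≠ i}), A ≤ ‖φ i - y‖^2 := by
        intro y hy
        rw [Finsupp.mem_span_image_iff_linearCombination] at hy
        obtain ⟨l, hl, rfl⟩ := hy
        have hli : l i = 0 := by
          by_contra hne
          exact (hl (Finsupp.mem_support_iff.2 hne)) rfl
        set d := Finsupp.single i (1:ℝ) - l with hd
        have hLd : Finsupp.linearCombination ℝ φ d
            = φ i - Finsupp.linearCombination ℝ φ l := by
          rw [hd, map_sub, Finsupp.linearCombination_single, one_smul]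
        have hdi : d i = 1 := by simp [hd, hli]
        have hone : 1 ≤ rbN2 d := by
          have hsupp : i ∈ d.support := Finsupp.mem_support_iff.2 (by rw [hdi]; norm_num)
          have h := Finset.single_le_sum (f := fun j => d j ^ 2)
            (fun j _ => sq_nonneg (d j)) hsupp
          simpa [hdi, rbN2] using h
        calc A = A * 1 := (mul_one A).symm
          _ ≤ A * rbN2 d := mul_le_mul_of_nonneg_left hone hA.le
          _ ≤ ‖Finsupp.linearCombination ℝ φ d‖^2 := hlow d
          _ = ‖φ i - Finsupp.linearCombination ℝ φ l‖^2 := by rw [hLd]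
      have hclos : φ i ∈ closure ((Submodule.span ℝ (φ '' {j | j ≠ i}) : Set H)) := by
        rw [← Submodule.topologicalClosure_coe]
        exact hmem
      obtain ⟨y, hy, hdist⟩ := Metric.mem_closure_iff.1 hclos (Real.sqrt A)
        (Real.sqrt_pos.2 hA)
      have h1 : A ≤ ‖φ i - y‖^2 := hsep y hy
      have h2 : ‖φ i - y‖ < Real.sqrt A := by rw [dist_eq_norm] at hdist; exact hdist
      nlinarith [Real.sq_sqrt hA.le, norm_nonneg (φ i - y), Real.sqrt_nonneg A]
    refine ⟨(‖p‖^2)⁻¹ • p, V.smul_mem _ hpV, fun j => ?_⟩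
    rw [real_inner_smul_right]
    by_cases hj : j = i
    · subst hj
      rw [hpself, if_pos rfl, inv_mul_cancel₀ (by positivity)]
    · rw [hporth j hj, mul_zero, if_neg hj]
  choose χ hχV hχbi using hχex
  have hχbi' : ∀ i i', ⟪φ i, χ i'⟫ = if i = i' then (1:ℝ) else 0 := fun i i' => hχbi i' i
  set ψ0 : I → H := fun i => Q.adjoint (χ i) with hψ0
  have hψ0W : ∀ i, ψ0 i ∈ W := fun i => hadjW (χ i)
  have hψ0bi : ∀ i i', ⟪φ i, ψ0 i'⟫ = if i = i' then (1:ℝ) else 0 := by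
    intro i i'
    rw [hψ0]
    rw [real_inner_comm, ContinuousLinearMap.adjoint_inner_left, hQfix (φ i) (hφV i),
      real_inner_comm]
    exact hχbi' i i'
  -- uniqueness
  have huniq : ∀ ψ : I → H, ((∀ i, ψ i ∈ W) ∧
      ∀ i i', ⟪φ i, ψ i'⟫ = if i = i' then (1:ℝ) else 0) → ψ = ψ0 := by
    rintro ψ ⟨hW', hbi'⟩
    funext i
    have hdW : ψ i - ψ0 i ∈ W := W.sub_mem (hW' i) (hψ0W i)
    have hdperp : ∀ x ∈ V, ⟪x, ψ i - ψ0 i⟫ = 0 := by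
      have hsub : (V : Set H) ⊆ {x | ⟪x, ψ i - ψ0 i⟫ = 0} := by
        rw [← hspan, Submodule.topologicalClosure_coe]
        refine closure_minimal ?_
          (isClosed_eq (Continuous.inner continuous_id continuous_const) continuous_const)
        intro x hx
        induction hx using Submodule.span_induction with
        | mem x hxr =>
          obtain ⟨j, rfl⟩ := hxr
          show ⟪φ j, ψ i - ψ0 i⟫ = 0
          rw [inner_sub_right, hbi' j i, hψ0bi j i, sub_self]
        | zero => show ⟪(0:H), _⟫ = 0; rw [inner_zero_left]
        | add x y hx' hy' ihx ihy =>
          show ⟪x + y, _⟫ = 0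
          rw [inner_add_left, ihx, ihy, add_zero]
        | smul a x hx' ihx =>
          show ⟪a • x, _⟫ = 0
          rw [real_inner_smul_left, ihx, mul_zero]
      exact fun x hx => hsub hx
    have hz : ‖ψ i - ψ0 i‖^2 = 0 := by
      rw [← real_inner_self_eq_norm_sq, hinnerW _ _ hdW]
      exact hdperp _ (hQran ▸ ⟨_, rfl⟩)
    have : ψ i - ψ0 i = 0 := by
      have := sq_eq_zero_iff.1 hz
      exact norm_eq_zero.1 this
    exact sub_eq_zero.1 this
  refine ⟨⟨ψ0, ⟨hψ0W, hψ0bi⟩, huniq⟩, ?_⟩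
  -- Riesz basis property
  intro ψ hψ
  rw [huniq ψ hψ]
  clear hψ ψ
  -- upper bound for χ combinations
  have hχup : ∀ c : I →₀ ℝ, ‖∑ i ∈ c.support, c i • χ i‖^2 ≤ A⁻¹ * rbN2 c := by
    intro c
    set X := ∑ i ∈ c.support, c i • χ i with hX
    have hXV : X ∈ V := Submodule.sum_mem V fun i _ => V.smul_mem _ (hχV i)
    refine norm_sq_le_of_dense_bound hspan hXV
      (mul_nonneg (by positivity) (rbN2_nonneg c)) ?_
    intro y hy
    rw [Finsupp.mem_span_range_iff_exists_finsupp] at hy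
    obtain ⟨a, rfl⟩ := hy
    have hy' : (a.sum fun i r => r • φ i) = Finsupp.linearCombination ℝ φ a :=
      (Finsupp.linearCombination_apply ℝ a).symm
    rw [hy']
    rw [inner_rbL_comb hχbi']
    have hcs : (∑ j ∈ a.support, a j * c j)^2
        ≤ (∑ j ∈ a.support, a j ^2) * ∑ j ∈ a.support, c j ^2 :=
      Finset.sum_mul_sq_le_sq_mul_sq _ _ _
    have h1 : (∑ j ∈ a.support, c j ^2) ≤ rbN2 c := sum_sq_le_rbN2 c _
    have h2 : (∑ j ∈ a.support, a j ^2) = rbN2 a := rfl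
    have h3 : rbN2 a ≤ A⁻¹ * ‖Finsupp.linearCombination ℝ φ a‖^2 := by
      rw [le_inv_mul_iff₀ hA]
      exact hlow a
    have h4 := rbN2_nonneg a
    have h5 := rbN2_nonneg c
    have h6 : (0:ℝ) ≤ ∑ j ∈ a.support, c j ^2 := Finset.sum_nonneg fun j _ => sq_nonneg _
    calc (∑ j ∈ a.support, a j * c j)^2
        ≤ rbN2 a * ∑ j ∈ a.support, c j ^2 := by rw [h2] at hcs; exact hcs
      _ ≤ rbN2 a * rbN2 c := mul_le_mul_of_nonneg_left h1 h4
      _ ≤ (A⁻¹ * ‖Finsupp.linearCombination ℝ φ a‖^2) * rbN2 c :=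
          mul_le_mul_of_nonneg_right h3 h5
      _ = (A⁻¹ * rbN2 c) * ‖Finsupp.linearCombination ℝ φ a‖^2 := by ring
  -- ψ0 combinations
  have hψ0sum : ∀ c : I →₀ ℝ, ∑ i ∈ c.support, c i • ψ0 i
      = Q.adjoint (∑ i ∈ c.support, c i • χ i) := by
    intro c
    rw [map_sum]
    exact Finset.sum_congr rfl fun i _ => (map_smul _ _ _).symm
  set B' : ℝ := max B⁻¹ (‖Q.adjoint‖^2 * A⁻¹) with hB'
  refine ⟨B⁻¹, B', inv_pos.2 hB, le_max_left _ _, ?_, ?_⟩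
  · -- span
    apply le_antisymm
    · refine Submodule.topologicalClosure_minimal _ ?_ hWc
      rw [Submodule.span_le]
      rintro x ⟨i, rfl⟩
      exact hψ0W i
    · -- W ≤ closure span ψ0
      intro w hw
      set M := (Submodule.span ℝ (Set.range ψ0)).topologicalClosure with hM
      haveI : CompleteSpace M := (Submodule.isClosed_topologicalClosure _).completeSpace_coe
      set m := w - (M.orthogonalProjectionOnto w : H) with hm
      have hmW : m ∈ W := by
        refine W.sub_mem hw ?_
        have hMW : M ≤ W := by
          refine Submodule.topologicalClosure_minimal _ ?_ hWc
          rw [Submodule.span_le]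
          rintro x ⟨i, rfl⟩
          exact hψ0W i
        exact hMW (M.orthogonalProjectionOnto w).2
      have hmo : m ∈ Mᗮ := Submodule.sub_starProjection_mem_orthogonal (K := M) w
      have hχm : ∀ i, ⟪χ i, Q m⟫ = 0 := by
        intro i
        have h1 : ⟪ψ0 i, m⟫ = 0 := by
          refine (Submodule.mem_orthogonal M m).1 hmo _ ?_
          exact Submodule.le_topologicalClosure _ (Submodule.subset_span ⟨i, rfl⟩)
        rw [hψ0, ContinuousLinearMap.adjoint_inner_left] at h1
        exact h1
      -- prove Q m = 0
      have hQmV : Q m ∈ V := hQran ▸ ⟨m, rfl⟩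
      have hQm0 : Q m = 0 := by
        have hclos : Q m ∈ closure (K : Set H) := by
          rw [← Submodule.topologicalClosure_coe, hspan]
          exact hQmV
        obtain ⟨u, hu, hlim⟩ := mem_closure_iff_seq_limit.1 hclos
        have hex : ∀ n, ∃ c : I →₀ ℝ, Finsupp.linearCombination ℝ φ c = u n := by
          intro n
          have h := hu n
          rw [SetLike.mem_coe, hK, Finsupp.mem_span_range_iff_exists_finsupp] at h
          obtain ⟨c, hc⟩ := h
          exact ⟨c, by rw [← hc]; exact Finsupp.linearCombination_apply ℝ c⟩
        choose c hc using hex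
        have hpt : ∀ i, Tendsto (fun n => c n i) atTop (nhds 0) := by
          intro i
          have he : ∀ n, c n i = ⟪u n, χ i⟫ := by
            intro n
            rw [← hc n, inner_rbL_single hχbi']
          have hl : Tendsto (fun n => ⟪u n, χ i⟫) atTop (nhds ⟪Q m, χ i⟫) :=
            hlim.inner tendsto_const_nhds
          rw [real_inner_comm, hχm i] at hl
          exact (Filter.tendsto_congr he).2 hl
        have hcauchy : ∀ ε > (0:ℝ), ∃ N, ∀ n ≥ N, ∀ m' ≥ N, rbN2 (c n - c m') ≤ ε := by
          intro ε hε
          have hcs : CauchySeq u := hlim.cauchySeq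
          rw [Metric.cauchySeq_iff] at hcs
          obtain ⟨N, hN⟩ := hcs (Real.sqrt (A * ε)) (Real.sqrt_pos.2 (by positivity))
          refine ⟨N, fun n hn m' hm' => ?_⟩
          have hd : ‖u n - u m'‖ < Real.sqrt (A * ε) := by
            have := hN n hn m' hm'
            rwa [dist_eq_norm] at this
          have hL : Finsupp.linearCombination ℝ φ (c n - c m') = u n - u m' := by
            rw [map_sub, hc, hc]
          have h1 : A * rbN2 (c n - c m') ≤ ‖u n - u m'‖^2 := by
            rw [← hL]; exact hlow _
          have h2 : ‖u n - u m'‖^2 < A * ε := by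
            nlinarith [Real.sq_sqrt (by positivity : (0:ℝ) ≤ A * ε), norm_nonneg (u n - u m'),
              Real.sqrt_nonneg (A * ε)]
          have h3 := rbN2_nonneg (c n - c m')
          nlinarith
        have hN2 : Tendsto (fun n => rbN2 (c n)) atTop (nhds 0) :=
          tendsto_rbN2_of_cauchy c hcauchy hpt
        have hnorm : Tendsto (fun n => ‖u n‖^2) atTop (nhds (‖Q m‖^2)) :=
          hlim.norm.pow 2
        have hle : ‖Q m‖^2 ≤ 0 := by
          refine le_of_tendsto_of_tendsto' hnorm (by simpa using hN2.const_mul B) fun n => ?_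
          rw [← hc n]
          exact hup (c n)
        have : ‖Q m‖^2 = 0 := le_antisymm hle (sq_nonneg _)
        exact norm_eq_zero.1 (sq_eq_zero_iff.1 this)
      have hm0 : m = 0 := by
        have hz : ⟪m, m⟫ = 0 := by
          rw [hinnerW m m hmW, hQm0, inner_zero_left]
        exact inner_self_eq_zero.1 hz
      have : w = (M.orthogonalProjectionOnto w : H) := by
        have := sub_eq_zero.1 hm0
        exact this
      rw [this]
      exact (M.orthogonalProjectionOnto w).2
  · -- bounds
    intro c
    constructor
    · exact rb_lower hB (fun c' => (hbd c').2) hψ0bi c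
    · have h1 : ‖∑ i ∈ c.support, c i • ψ0 i‖^2
          ≤ ‖Q.adjoint‖^2 * ‖∑ i ∈ c.support, c i • χ i‖^2 := by
        rw [hψ0sum c]
        have := ContinuousLinearMap.le_opNorm (Q.adjoint) (∑ i ∈ c.support, c i • χ i)
        nlinarith [norm_nonneg (Q.adjoint (∑ i ∈ c.support, c i • χ i)),
          norm_nonneg (∑ i ∈ c.support, c i • χ i), norm_nonneg (Q.adjoint)]
      have h2 := hχup c
      have h3 : ‖Q.adjoint‖^2 * ‖∑ i ∈ c.support, c i • χ i‖^2
          ≤ (‖Q.adjoint‖^2 * A⁻¹) * rbN2 c := by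
        rw [mul_assoc]
        exact mul_le_mul_of_nonneg_left h2 (sq_nonneg _)
      have h4 : (‖Q.adjoint‖^2 * A⁻¹) * rbN2 c ≤ B' * rbN2 c :=
        mul_le_mul_of_nonneg_right (le_max_right _ _) (rbN2_nonneg c)
      calc ‖∑ i ∈ c.support, c i • ψ0 i‖^2 ≤ _ := h1
        _ ≤ _ := h3
        _ ≤ B' * rbN2 c := h4
end

section
/- Let H be a real Hilbert space, I a countable index set, and let Φ = (φ_i)_{i∈I} and Φ̃ = (φ̃_i)_{i∈I} be Riesz bases for closed subspaces V and Ṽ of H, respectively. Suppose the bounded operator ⟨Φ, Φ̃⟩_H on ℓ²(I) is boundedly invertible. Then the inf-sup constant β of the pair (V, Ṽ) satisfies β ≥ ‖⟨Φ,Φ̃⟩_H^{-1}‖^{-1} / √( ‖⟨Φ,Φ⟩_H‖ · ‖⟨Φ̃,Φ̃⟩_H‖ ), and the same lower bound holds for the inf-sup constant of the pair (Ṽ, V). -/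
open scoped RealInnerProductSpace

/-- `Op` is the bounded operator `ℓ²(I) → ℓ²(I)` with matrix `[⟨φ i, ψ k⟩]_{i,k}`. -/
def IsGramOp {H : Type*} [NormedAddCommGroup H] [InnerProductSpace ℝ H]
    {I : Type*} [DecidableEq I] (φ ψ : I → H)
    (Op : lp (fun _ : I => ℝ) 2 →L[ℝ] lp (fun _ : I => ℝ) 2) : Prop :=
  ∀ i k : I, Op (lp.single 2 k (1 : ℝ)) i = ⟪φ i, ψ k⟫

set_option linter.unusedSectionVars false
set_option maxHeartbeats 2000000
set_option synthInstance.maxHeartbeats 200000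
open scoped ENNReal

section aux
variable {H : Type*} [NormedAddCommGroup H] [InnerProductSpace ℝ H] [CompleteSpace H]
variable {I : Type*} [DecidableEq I]

lemma riesz_finset {φ : I → H} {V : Submodule ℝ H} {A B : ℝ} (h : IsRieszBasisWith φ V A B)
    (f : I → ℝ) (t : Finset I) :
    A * ∑ i ∈ t, f i ^ 2 ≤ ‖∑ i ∈ t, f i • φ i‖ ^ 2 ∧
    ‖∑ i ∈ t, f i • φ i‖ ^ 2 ≤ B * ∑ i ∈ t, f i ^ 2 := by
  classical
  set c : I →₀ ℝ := Finsupp.onFinset t (fun i => if i ∈ t then f i else 0)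
    (by intro i hi; by_contra hmem; simp [hmem] at hi) with hc
  have hsupp : c.support ⊆ t := Finsupp.support_onFinset_subset
  have hct : ∀ i ∈ t, c i = f i := by intro i hi; simp [hc, Finsupp.onFinset_apply, hi]
  have h1 : ∑ i ∈ t, f i ^ 2 = ∑ i ∈ c.support, c i ^ 2 := by
    rw [Finset.sum_subset hsupp (fun i hi hni => by
      rw [Finsupp.notMem_support_iff] at hni; simp [hni])]
    exact Finset.sum_congr rfl (fun i hi => by rw [hct i hi])
  have h2 : ∑ i ∈ t, f i • φ i = ∑ i ∈ c.support, c i • φ i := by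
    rw [Finset.sum_subset hsupp (fun i hi hni => by
      rw [Finsupp.notMem_support_iff] at hni; simp [hni])]
    exact Finset.sum_congr rfl (fun i hi => by rw [hct i hi])
  rw [h1, h2]
  exact h.2 c

lemma lp_summable_sq (f : lp (fun _ : I => ℝ) 2) : Summable (fun i => f i ^ 2) := by
  have := (lp.memℓp f).summable (p := 2) (by norm_num)
  convert this using 2 with i
  rw [show ((2 : ℝ≥0∞).toReal) = (2 : ℝ) by norm_num]
  rw [show ‖f i‖ ^ (2:ℝ) = ‖f i‖ ^ (2:ℕ) by
    rw [← Real.rpow_natCast]; norm_num]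
  simp [sq_abs, Real.norm_eq_abs]

lemma lp_norm_sq_eq (f : lp (fun _ : I => ℝ) 2) : ‖f‖ ^ 2 = ∑' i, f i ^ 2 := by
  have h1 : ⟪f, f⟫ = ∑' i, (f i) * (f i) := by
    rw [lp.inner_eq_tsum]; rfl
  rw [← real_inner_self_eq_norm_sq, h1]
  congr 1; ext i; ring

lemma summable_smul_of_riesz {φ : I → H} {V : Submodule ℝ H} {A B : ℝ} (hA : 0 < A)
    (hAB : A ≤ B) (h : IsRieszBasisWith φ V A B) (f : lp (fun _ : I => ℝ) 2) :
    Summable (fun i => f i • φ i) := by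
  have hB : 0 < B := hA.trans_le hAB
  rw [summable_iff_vanishing_norm]
  intro ε hε
  obtain ⟨s, hs⟩ := summable_iff_vanishing_norm.1 (lp_summable_sq f) (ε ^ 2 / B)
    (by positivity)
  refine ⟨s, fun t ht => ?_⟩
  have h1 := (riesz_finset h f t).2
  have h2 : ∑ i ∈ t, f i ^ 2 < ε ^ 2 / B := by
    have := hs t ht
    calc ∑ i ∈ t, f i ^ 2 ≤ ‖∑ i ∈ t, f i ^ 2‖ := le_abs_self _
    _ < ε ^ 2 / B := this
  have h3 : ‖∑ i ∈ t, f i • φ i‖ ^ 2 < ε ^ 2 := by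
    calc ‖∑ i ∈ t, f i • φ i‖ ^ 2 ≤ B * ∑ i ∈ t, f i ^ 2 := h1
    _ < B * (ε ^ 2 / B) := by exact (mul_lt_mul_iff_right₀ hB).2 h2
    _ = ε ^ 2 := by field_simp
  exact lt_of_pow_lt_pow_left₀ 2 hε.le h3

section synth
variable {φ : I → H} {V : Submodule ℝ H} {A B : ℝ}

/-- The synthesis operator of a Riesz basis, as a bare function. -/
noncomputable def synthFun (φ : I → H) (f : lp (fun _ : I => ℝ) 2) : H := ∑' i, f i • φ i

lemma synth_hasSum (hA : 0 < A) (hAB : A ≤ B) (h : IsRieszBasisWith φ V A B)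
    (f : lp (fun _ : I => ℝ) 2) : HasSum (fun i => f i • φ i) (synthFun φ f) :=
  (summable_smul_of_riesz hA hAB h f).hasSum

lemma synth_bounds (hA : 0 < A) (hAB : A ≤ B) (h : IsRieszBasisWith φ V A B)
    (f : lp (fun _ : I => ℝ) 2) :
    A * ‖f‖ ^ 2 ≤ ‖synthFun φ f‖ ^ 2 ∧ ‖synthFun φ f‖ ^ 2 ≤ B * ‖f‖ ^ 2 := by
  have hT := synth_hasSum hA hAB h f
  have hsq := (lp_summable_sq f).hasSum
  have hnorm : Filter.Tendsto (fun s : Finset I => ‖∑ i ∈ s, f i • φ i‖ ^ 2)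
      Filter.atTop (nhds (‖synthFun φ f‖ ^ 2)) := (hT.norm.pow 2)
  rw [lp_norm_sq_eq]
  constructor
  · refine le_of_tendsto_of_tendsto' (hsq.const_mul A) hnorm (fun s => ?_)
    exact (riesz_finset h f s).1
  · refine le_of_tendsto_of_tendsto' hnorm (hsq.const_mul B) (fun s => ?_)
    exact (riesz_finset h f s).2

/-- The synthesis operator of a Riesz basis, as a continuous linear map. -/
noncomputable def synthCLM (φ : I → H) (hA : 0 < A) (hAB : A ≤ B)
    (h : IsRieszBasisWith φ V A B) : lp (fun _ : I => ℝ) 2 →L[ℝ] H :=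
  LinearMap.mkContinuous
    { toFun := synthFun φ
      map_add' := fun f g => by
        have h1 := synth_hasSum hA hAB h f
        have h2 := synth_hasSum hA hAB h g
        have h3 := synth_hasSum hA hAB h (f + g)
        refine h3.unique ?_
        have : (fun i => (f + g) i • φ i) = fun i => f i • φ i + g i • φ i := by
          ext i
          rw [lp.coeFn_add]
          simp [add_smul]
        rw [this]
        exact h1.add h2
      map_smul' := fun c f => by
        have h1 := synth_hasSum hA hAB h f
        have h3 := synth_hasSum hA hAB h (c • f)
        refine h3.unique ?_
        have : (fun i => (c • f) i • φ i) = fun i => c • (f i • φ i) := by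
          ext i
          rw [lp.coeFn_smul]
          simp [smul_smul]
        rw [this]
        exact h1.const_smul c }
    (Real.sqrt B)
    (by
      intro f
      have hb := (synth_bounds hA hAB h f).2
      have hBnn : 0 ≤ B := (hA.trans_le hAB).le
      calc ‖synthFun φ f‖ = Real.sqrt (‖synthFun φ f‖ ^ 2) := by
            rw [Real.sqrt_sq (norm_nonneg _)]
      _ ≤ Real.sqrt (B * ‖f‖ ^ 2) := Real.sqrt_le_sqrt hb
      _ = Real.sqrt B * ‖f‖ := by
            rw [Real.sqrt_mul hBnn, Real.sqrt_sq (norm_nonneg _)])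

lemma synthCLM_apply (hA : 0 < A) (hAB : A ≤ B) (h : IsRieszBasisWith φ V A B)
    (f : lp (fun _ : I => ℝ) 2) : synthCLM φ hA hAB h f = synthFun φ f := rfl

lemma synthCLM_single (hA : 0 < A) (hAB : A ≤ B) (h : IsRieszBasisWith φ V A B)
    (i : I) : synthCLM φ hA hAB h (lp.single 2 i 1) = φ i := by
  rw [synthCLM_apply, synthFun]
  rw [tsum_eq_single i]
  · rw [lp.single_apply_self, one_smul]
  · intro j hj
    rw [lp.single_apply_ne 2 i 1 hj, zero_smul]

end synth

section range
variable {φ : I → H} {V : Submodule ℝ H} {A B : ℝ}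

lemma riesz_isClosed {A B : ℝ} (h : IsRieszBasisWith φ V A B) : IsClosed (V : Set H) := by
  rw [← h.1]
  exact Submodule.isClosed_topologicalClosure _

lemma synth_antilipschitz (hA : 0 < A) (hAB : A ≤ B) (h : IsRieszBasisWith φ V A B) :
    AntilipschitzWith ⟨(Real.sqrt A)⁻¹, by positivity⟩ (synthCLM φ hA hAB h) := by
  apply ContinuousLinearMap.antilipschitz_of_bound
  intro f
  have hb : A * ‖f‖ ^ 2 ≤ ‖synthCLM φ hA hAB h f‖ ^ 2 := (synth_bounds hA hAB h f).1
  have key : ‖f‖ ^ 2 ≤ ((Real.sqrt A)⁻¹ * ‖synthCLM φ hA hAB h f‖) ^ 2 := by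
    rw [mul_pow, inv_pow, Real.sq_sqrt hA.le]
    rw [inv_mul_eq_div, le_div_iff₀ hA]
    nlinarith [hb]
  calc ‖f‖ = Real.sqrt (‖f‖ ^ 2) := (Real.sqrt_sq (norm_nonneg _)).symm
  _ ≤ Real.sqrt (((Real.sqrt A)⁻¹ * ‖synthCLM φ hA hAB h f‖) ^ 2) := Real.sqrt_le_sqrt key
  _ = (Real.sqrt A)⁻¹ * ‖synthCLM φ hA hAB h f‖ := Real.sqrt_sq (by positivity)
  _ = (⟨(Real.sqrt A)⁻¹, by positivity⟩ : NNReal) * ‖synthCLM φ hA hAB h f‖ := rfl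

lemma synth_range (hA : 0 < A) (hAB : A ≤ B) (h : IsRieszBasisWith φ V A B) :
    Set.range (synthCLM φ hA hAB h) = (V : Set H) := by
  apply Set.Subset.antisymm
  · rintro _ ⟨f, rfl⟩
    have hT := synth_hasSum hA hAB h f
    refine (riesz_isClosed h).mem_of_tendsto hT (Filter.Eventually.of_forall (fun s => ?_))
    refine Submodule.sum_mem V (fun i _ => Submodule.smul_mem V _ ?_)
    have : φ i ∈ Submodule.span ℝ (Set.range φ) := Submodule.subset_span ⟨i, rfl⟩
    rw [← h.1]
    exact Submodule.le_topologicalClosure _ this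
  · intro v hv
    have hcl : IsClosed (Set.range (synthCLM φ hA hAB h)) :=
      (synth_antilipschitz hA hAB h).isClosed_range
        (synthCLM φ hA hAB h).uniformContinuous
    have hle : (Submodule.span ℝ (Set.range φ)).topologicalClosure ≤
        LinearMap.range ((synthCLM φ hA hAB h) : lp (fun _ : I => ℝ) 2 →ₗ[ℝ] H) := by
      apply Submodule.topologicalClosure_minimal
      · rw [Submodule.span_le]
        rintro _ ⟨i, rfl⟩
        exact ⟨lp.single 2 i 1, synthCLM_single hA hAB h i⟩
      · exact hcl
    rw [← h.1] at hv
    exact hle hv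

end range

section gram
variable {I : Type*} [DecidableEq I] {φ ψ : I → H} {V W : Submodule ℝ H} {A B A' B' : ℝ}

lemma hasSum_inner_synth (hA : 0 < A) (hAB : A ≤ B) (h : IsRieszBasisWith φ V A B)
    (f : lp (fun _ : I => ℝ) 2) (x : H) :
    HasSum (fun i => f i * ⟪x, φ i⟫) ⟪x, synthCLM φ hA hAB h f⟫ := by
  have := (synth_hasSum hA hAB h f).mapL (innerSL ℝ x)
  convert this using 2 with i
  · rfl
  · simp [innerSL_apply_apply, inner_smul_right, mul_comm]
  · rw [synthCLM_apply, innerSL_apply_apply]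

lemma inner_coord_gram {G : lp (fun _ : I => ℝ) 2 →L[ℝ] lp (fun _ : I => ℝ) 2}
    (hG : IsGramOp φ ψ G) (hA' : 0 < A') (hA'B' : A' ≤ B')
    (hψ : IsRieszBasisWith ψ W A' B') (g : lp (fun _ : I => ℝ) 2) (i : I) :
    (G g) i = ⟪φ i, synthCLM ψ hA' hA'B' hψ g⟫ := by
  have hsingle : HasSum (fun k => lp.single 2 k (g k)) g :=
    lp.hasSum_single (by norm_num) g
  have h2 : ∀ k : I, ⟪lp.single 2 i (1:ℝ), G (lp.single 2 k (g k))⟫ = g k * ⟪φ i, ψ k⟫ := by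
    intro k
    have e1 : lp.single 2 k (g k) =
        g k • lp.single (E := fun _ : I => ℝ) 2 k (1:ℝ) := by
      rw [← lp.single_smul]
      simp [smul_eq_mul]
    rw [e1, map_smul, inner_smul_right]
    congr 1
    rw [lp.inner_single_left]
    simp only [RCLike.inner_apply, starRingEnd_apply, star_trivial, one_mul, mul_one]
    exact hG i k
  have h3 : HasSum (fun k => g k * ⟪φ i, ψ k⟫) ((G g) i) := by
    have h1 := (hsingle.mapL G).mapL (innerSL ℝ (lp.single 2 i (1:ℝ)))
    simp only [innerSL_apply_apply] at h1
    have e0 : ⟪lp.single 2 i (1:ℝ), G g⟫ = (G g) i := by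
      rw [lp.inner_single_left]
      simp only [RCLike.inner_apply, starRingEnd_apply, star_trivial, one_mul, mul_one]
    rw [e0] at h1
    exact h1.congr_fun fun k => (h2 k).symm
  exact h3.unique (hasSum_inner_synth hA' hA'B' hψ g (φ i))

lemma gram_identity {G : lp (fun _ : I => ℝ) 2 →L[ℝ] lp (fun _ : I => ℝ) 2}
    (hG : IsGramOp φ ψ G) (hA : 0 < A) (hAB : A ≤ B) (hφ : IsRieszBasisWith φ V A B)
    (hA' : 0 < A') (hA'B' : A' ≤ B') (hψ : IsRieszBasisWith ψ W A' B')
    (f g : lp (fun _ : I => ℝ) 2) :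
    ⟪synthCLM φ hA hAB hφ f, synthCLM ψ hA' hA'B' hψ g⟫ = ⟪f, G g⟫ := by
  have h1 : HasSum (fun i => f i * ⟪synthCLM ψ hA' hA'B' hψ g, φ i⟫)
      ⟪synthCLM ψ hA' hA'B' hψ g, synthCLM φ hA hAB hφ f⟫ :=
    hasSum_inner_synth hA hAB hφ f _
  have h2 : HasSum (fun i => (f i) * ((G g) i)) ⟪f, G g⟫ := by
    exact (lp.hasSum_inner (𝕜 := ℝ) f (G g)).congr_fun fun i => by
      simp [RCLike.inner_apply, mul_comm]
  have h1' : HasSum (fun i => (f i) * ((G g) i))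
      ⟪synthCLM ψ hA' hA'B' hψ g, synthCLM φ hA hAB hφ f⟫ := by
    refine h1.congr_fun fun i => ?_
    rw [inner_coord_gram hG hA' hA'B' hψ g i, real_inner_comm]
  rw [real_inner_comm]
  exact h1'.unique h2

end gram
end aux

section main
variable {H : Type*} [NormedAddCommGroup H] [InnerProductSpace ℝ H] [CompleteSpace H]

lemma le_infSupConst_of {V W : Submodule ℝ H} [Nonempty {v : V // v ≠ 0}] {β : ℝ}
    (h : ∀ v : {v : V // v ≠ 0}, ∃ w : {w : W // w ≠ 0},
      β ≤ ⟪((v : V) : H), ((w : W) : H)⟫ / (‖((v : V) : H)‖ * ‖((w : W) : H)‖)) :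
    β ≤ infSupConst V W := by
  refine le_ciInf fun v => ?_
  obtain ⟨w, hw⟩ := h v
  refine hw.trans (le_ciSup (f := fun w : {w : W // w ≠ 0} =>
    ⟪((v : V) : H), ((w : W) : H)⟫ / (‖((v : V) : H)‖ * ‖((w : W) : H)‖)) ?_ w)
  refine ⟨1, ?_⟩
  rintro x ⟨w', rfl⟩
  dsimp only
  by_cases hd : ‖((v : V) : H)‖ * ‖((w' : W) : H)‖ = 0
  · rw [hd, div_zero]; norm_num
  · have hv0 : ((v : V) : H) ≠ 0 := by
      simpa [Submodule.coe_eq_zero] using v.2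
    have hw0 : ((w' : W) : H) ≠ 0 := by
      simpa [Submodule.coe_eq_zero] using w'.2
    have hpos : 0 < ‖((v : V) : H)‖ * ‖((w' : W) : H)‖ := by
      have := norm_pos_iff.2 hv0
      have := norm_pos_iff.2 hw0
      positivity
    rw [div_le_one hpos]
    exact real_inner_le_norm _ _

end main

theorem stmt5 {H : Type*} [NormedAddCommGroup H] [InnerProductSpace ℝ H] [CompleteSpace H]
    {I : Type*} [Countable I] [DecidableEq I]
    (V W : Submodule ℝ H) (hVc : IsClosed (V : Set H)) (hWc : IsClosed (W : Set H))
    (φ ψ : I → H) (hφ : IsRieszBasis φ V) (hψ : IsRieszBasis ψ W)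
    (G Gφφ Gψψ Ginv : lp (fun _ : I => ℝ) 2 →L[ℝ] lp (fun _ : I => ℝ) 2)
    (hG : IsGramOp φ ψ G) (hGφφ : IsGramOp φ φ Gφφ) (hGψψ : IsGramOp ψ ψ Gψψ)
    (hGinv₁ : G.comp Ginv = ContinuousLinearMap.id ℝ (lp (fun _ : I => ℝ) 2))
    (hGinv₂ : Ginv.comp G = ContinuousLinearMap.id ℝ (lp (fun _ : I => ℝ) 2)) :
    ‖Ginv‖⁻¹ / Real.sqrt (‖Gφφ‖ * ‖Gψψ‖) ≤ infSupConst V W ∧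
    ‖Ginv‖⁻¹ / Real.sqrt (‖Gφφ‖ * ‖Gψψ‖) ≤ infSupConst W V := by
  classical
  obtain ⟨A, B, hA, hAB, hφ'⟩ := hφ
  obtain ⟨A', B', hA', hA'B', hψ'⟩ := hψ
  rcases isEmpty_or_nonempty I with hIe | hI
  · -- the index set is empty: everything is trivial
    have hGinv0 : Ginv = 0 := by
      apply ContinuousLinearMap.ext
      intro f
      apply lp.ext
      funext i
      exact hIe.elim i
    have hL : ‖Ginv‖⁻¹ / Real.sqrt (‖Gφφ‖ * ‖Gψψ‖) = 0 := by
      rw [hGinv0, norm_zero, inv_zero, zero_div]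
    have hbot : ∀ (U : Submodule ℝ H) (χ : I → H) (A B : ℝ),
        IsRieszBasisWith χ U A B → U = ⊥ := by
      intro U χ A B hU
      rw [← hU.1, Set.range_eq_empty χ, Submodule.span_empty]
      exact IsClosed.submodule_topologicalClosure_eq (by
        simpa using (isClosed_singleton (x := (0 : H))))
    have hVbot := hbot V φ A B hφ'
    have hWbot := hbot W ψ A' B' hψ'
    have hemp : ∀ (U : Submodule ℝ H), U = ⊥ → IsEmpty {v : U // v ≠ 0} := by
      intro U hU
      subst hU
      refine ⟨fun v => v.2 ?_⟩
      have hm : ((v : (⊥ : Submodule ℝ H)) : H) ∈ (⊥ : Submodule ℝ H) :=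
        (v : (⊥ : Submodule ℝ H)).2
      rw [Submodule.mem_bot] at hm
      exact Subtype.ext hm
    constructor
    · rw [hL]
      haveI := hemp V hVbot
      exact le_of_eq (Real.iInf_of_isEmpty _).symm
    · rw [hL]
      haveI := hemp W hWbot
      exact le_of_eq (Real.iInf_of_isEmpty _).symm
  · obtain ⟨i0⟩ := hI
    set T := synthCLM φ hA hAB hφ' with hTdef
    set S := synthCLM ψ hA' hA'B' hψ' with hSdef
    have hTr : Set.range T = (V : Set H) := synth_range hA hAB hφ'
    have hSr : Set.range S = (W : Set H) := synth_range hA' hA'B' hψ'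
    have gTS : ∀ f g, ⟪T f, S g⟫ = ⟪f, G g⟫ := gram_identity hG hA hAB hφ' hA' hA'B' hψ'
    have gTT : ∀ f g, ⟪T f, T g⟫ = ⟪f, Gφφ g⟫ := gram_identity hGφφ hA hAB hφ' hA hAB hφ'
    have gSS : ∀ f g, ⟪S f, S g⟫ = ⟪f, Gψψ g⟫ := gram_identity hGψψ hA' hA'B' hψ' hA' hA'B' hψ'
    have hTn : ∀ f, ‖T f‖ ≤ Real.sqrt ‖Gφφ‖ * ‖f‖ := by
      intro f
      have h1 : ‖T f‖ ^ 2 ≤ ‖Gφφ‖ * ‖f‖ ^ 2 := by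
        rw [← real_inner_self_eq_norm_sq, gTT f f]
        calc ⟪f, Gφφ f⟫ ≤ ‖f‖ * ‖Gφφ f‖ := real_inner_le_norm _ _
        _ ≤ ‖Gφφ‖ * ‖f‖ ^ 2 := by nlinarith [Gφφ.le_opNorm f, norm_nonneg f]
      calc ‖T f‖ = Real.sqrt (‖T f‖ ^ 2) := (Real.sqrt_sq (norm_nonneg _)).symm
      _ ≤ Real.sqrt (‖Gφφ‖ * ‖f‖ ^ 2) := Real.sqrt_le_sqrt h1
      _ = Real.sqrt ‖Gφφ‖ * ‖f‖ := by
            rw [Real.sqrt_mul (norm_nonneg _), Real.sqrt_sq (norm_nonneg _)]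
    have hSn : ∀ g, ‖S g‖ ≤ Real.sqrt ‖Gψψ‖ * ‖g‖ := by
      intro g
      have h1 : ‖S g‖ ^ 2 ≤ ‖Gψψ‖ * ‖g‖ ^ 2 := by
        rw [← real_inner_self_eq_norm_sq, gSS g g]
        calc ⟪g, Gψψ g⟫ ≤ ‖g‖ * ‖Gψψ g‖ := real_inner_le_norm _ _
        _ ≤ ‖Gψψ‖ * ‖g‖ ^ 2 := by nlinarith [Gψψ.le_opNorm g, norm_nonneg g]
      calc ‖S g‖ = Real.sqrt (‖S g‖ ^ 2) := (Real.sqrt_sq (norm_nonneg _)).symm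
      _ ≤ Real.sqrt (‖Gψψ‖ * ‖g‖ ^ 2) := Real.sqrt_le_sqrt h1
      _ = Real.sqrt ‖Gψψ‖ * ‖g‖ := by
            rw [Real.sqrt_mul (norm_nonneg _), Real.sqrt_sq (norm_nonneg _)]
    have hf0 : ‖(lp.single 2 i0 (1:ℝ) : lp (fun _ : I => ℝ) 2)‖ = 1 := by
      have := lp.norm_single (p := 2) (E := fun _ : I => ℝ) (by norm_num)
        i0 (1:ℝ)
      simpa using this
    have hsingle_ne : (lp.single 2 i0 (1:ℝ) : lp (fun _ : I => ℝ) 2) ≠ 0 := by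
      intro h0
      rw [h0, norm_zero] at hf0
      norm_num at hf0
    have hGinv_ne : Ginv ≠ 0 := by
      intro h0
      have h1 := congrArg (fun L : lp (fun _ : I => ℝ) 2 →L[ℝ] lp (fun _ : I => ℝ) 2 =>
        L (lp.single 2 i0 (1:ℝ))) hGinv₂
      simp only [ContinuousLinearMap.comp_apply, ContinuousLinearMap.id_apply, h0,
        ContinuousLinearMap.zero_apply] at h1
      exact hsingle_ne h1.symm
    have hGinv_pos : 0 < ‖Ginv‖ := by
      rcases (norm_nonneg Ginv).lt_or_eq with h | h
      · exact h
      · exact absurd ((ContinuousLinearMap.opNorm_zero_iff _).1 h.symm) hGinv_ne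
    have hGφφ_pos : 0 < ‖Gφφ‖ := by
      have hlow : A * ‖(lp.single 2 i0 (1:ℝ) : lp (fun _ : I => ℝ) 2)‖ ^ 2 ≤
          ‖T (lp.single 2 i0 (1:ℝ))‖ ^ 2 := (synth_bounds hA hAB hφ' _).1
      have he : ‖T (lp.single 2 i0 (1:ℝ))‖ ^ 2 =
          ⟪(lp.single 2 i0 (1:ℝ) : lp (fun _ : I => ℝ) 2), Gφφ (lp.single 2 i0 (1:ℝ))⟫ := by
        rw [← gTT, real_inner_self_eq_norm_sq]
      have h2 := real_inner_le_norm (lp.single 2 i0 (1:ℝ) : lp (fun _ : I => ℝ) 2)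
        (Gφφ (lp.single 2 i0 (1:ℝ)))
      have h3 := Gφφ.le_opNorm (lp.single 2 i0 (1:ℝ) : lp (fun _ : I => ℝ) 2)
      rw [hf0] at hlow h2 h3
      nlinarith
    have hGψψ_pos : 0 < ‖Gψψ‖ := by
      have hlow : A' * ‖(lp.single 2 i0 (1:ℝ) : lp (fun _ : I => ℝ) 2)‖ ^ 2 ≤
          ‖S (lp.single 2 i0 (1:ℝ))‖ ^ 2 := (synth_bounds hA' hA'B' hψ' _).1
      have he : ‖S (lp.single 2 i0 (1:ℝ))‖ ^ 2 =
          ⟪(lp.single 2 i0 (1:ℝ) : lp (fun _ : I => ℝ) 2), Gψψ (lp.single 2 i0 (1:ℝ))⟫ := by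
        rw [← gSS, real_inner_self_eq_norm_sq]
      have h2 := real_inner_le_norm (lp.single 2 i0 (1:ℝ) : lp (fun _ : I => ℝ) 2)
        (Gψψ (lp.single 2 i0 (1:ℝ)))
      have h3 := Gψψ.le_opNorm (lp.single 2 i0 (1:ℝ) : lp (fun _ : I => ℝ) 2)
      rw [hf0] at hlow h2 h3
      nlinarith
    have hsq_pos : 0 < Real.sqrt (‖Gφφ‖ * ‖Gψψ‖) := Real.sqrt_pos.2 (by positivity)
    have hsqrt_eq : Real.sqrt ‖Gφφ‖ * Real.sqrt ‖Gψψ‖ = Real.sqrt (‖Gφφ‖ * ‖Gψψ‖) :=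
      (Real.sqrt_mul (norm_nonneg _) _).symm
    have hTne : T (lp.single 2 i0 (1:ℝ)) ≠ 0 := by
      intro h0
      have hb : A * ‖(lp.single 2 i0 (1:ℝ) : lp (fun _ : I => ℝ) 2)‖ ^ 2 ≤
          ‖T (lp.single 2 i0 (1:ℝ))‖ ^ 2 := (synth_bounds hA hAB hφ' _).1
      rw [h0, norm_zero, hf0] at hb
      nlinarith
    have hSne : S (lp.single 2 i0 (1:ℝ)) ≠ 0 := by
      intro h0
      have hb : A' * ‖(lp.single 2 i0 (1:ℝ) : lp (fun _ : I => ℝ) 2)‖ ^ 2 ≤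
          ‖S (lp.single 2 i0 (1:ℝ))‖ ^ 2 := (synth_bounds hA' hA'B' hψ' _).1
      rw [h0, norm_zero, hf0] at hb
      nlinarith
    haveI hNV : Nonempty {v : V // v ≠ 0} := by
      refine ⟨⟨⟨T (lp.single 2 i0 (1:ℝ)), ?_⟩, ?_⟩⟩
      · rw [← SetLike.mem_coe, ← hTr]; exact ⟨_, rfl⟩
      · intro h0
        exact hTne (by simpa [Submodule.mk_eq_zero] using h0)
    haveI hNW : Nonempty {w : W // w ≠ 0} := by
      refine ⟨⟨⟨S (lp.single 2 i0 (1:ℝ)), ?_⟩, ?_⟩⟩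
      · rw [← SetLike.mem_coe, ← hSr]; exact ⟨_, rfl⟩
      · intro h0
        exact hSne (by simpa [Submodule.mk_eq_zero] using h0)
    constructor
    · refine le_infSupConst_of fun v => ?_
      have hvV : ((v : V) : H) ∈ Set.range T := by
        rw [hTr]; exact (v : V).2
      obtain ⟨f, hf⟩ := hvV
      have hvne : ((v : V) : H) ≠ 0 := by
        simpa [Submodule.coe_eq_zero] using v.2
      have hfne : f ≠ 0 := by
        rintro rfl
        rw [map_zero] at hf
        exact hvne hf.symm
      have hfn_pos : 0 < ‖f‖ := norm_pos_iff.2 hfne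
      set g := Ginv f with hg
      have hGg : G g = f := by
        have h1 := congrArg (fun L : lp (fun _ : I => ℝ) 2 →L[ℝ] lp (fun _ : I => ℝ) 2 =>
          L f) hGinv₁
        simpa using h1
      have hinner : ⟪T f, S g⟫ = ‖f‖ ^ 2 := by
        rw [gTS, hGg, real_inner_self_eq_norm_sq]
      have hSg_ne : S g ≠ 0 := by
        intro h0
        rw [h0, inner_zero_right] at hinner
        nlinarith
      have hwW : S g ∈ W := by
        rw [← SetLike.mem_coe, ← hSr]; exact ⟨g, rfl⟩
      refine ⟨⟨⟨S g, hwW⟩, fun h0 => hSg_ne (by simpa [Submodule.mk_eq_zero] using h0)⟩, ?_⟩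
      dsimp only
      rw [← hf, hinner]
      have hgn : ‖g‖ ≤ ‖Ginv‖ * ‖f‖ := Ginv.le_opNorm f
      have hTf_pos : 0 < ‖T f‖ := norm_pos_iff.2 (by rw [hf]; exact hvne)
      have hSg_pos : 0 < ‖S g‖ := norm_pos_iff.2 hSg_ne
      have hden_le : ‖T f‖ * ‖S g‖ ≤ Real.sqrt (‖Gφφ‖ * ‖Gψψ‖) * ‖Ginv‖ * ‖f‖ ^ 2 := by
        calc ‖T f‖ * ‖S g‖
            ≤ (Real.sqrt ‖Gφφ‖ * ‖f‖) * (Real.sqrt ‖Gψψ‖ * (‖Ginv‖ * ‖f‖)) := by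
              apply mul_le_mul (hTn f) ((hSn g).trans ?_) (norm_nonneg _) (by positivity)
              have h4 : (0:ℝ) ≤ Real.sqrt ‖Gψψ‖ := Real.sqrt_nonneg _
              nlinarith [hgn]
        _ = Real.sqrt ‖Gφφ‖ * Real.sqrt ‖Gψψ‖ * ‖Ginv‖ * ‖f‖ ^ 2 := by ring
        _ = Real.sqrt (‖Gφφ‖ * ‖Gψψ‖) * ‖Ginv‖ * ‖f‖ ^ 2 := by rw [hsqrt_eq]
      calc ‖Ginv‖⁻¹ / Real.sqrt (‖Gφφ‖ * ‖Gψψ‖)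
          = ‖f‖ ^ 2 / (Real.sqrt (‖Gφφ‖ * ‖Gψψ‖) * ‖Ginv‖ * ‖f‖ ^ 2) := by
            field_simp
      _ ≤ ‖f‖ ^ 2 / (‖T f‖ * ‖S g‖) := by
            apply div_le_div_of_nonneg_left (by positivity) (by positivity) hden_le
    · refine le_infSupConst_of fun v => ?_
      have hvW : ((v : W) : H) ∈ Set.range S := by
        rw [hSr]; exact (v : W).2
      obtain ⟨g, hgv⟩ := hvW
      have hvne : ((v : W) : H) ≠ 0 := by
        simpa [Submodule.coe_eq_zero] using v.2
      have hgne : g ≠ 0 := by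
        rintro rfl
        rw [map_zero] at hgv
        exact hvne hgv.symm
      set f := G g with hfdef
      have hGig : Ginv f = g := by
        have h1 := congrArg (fun L : lp (fun _ : I => ℝ) 2 →L[ℝ] lp (fun _ : I => ℝ) 2 =>
          L g) hGinv₂
        simpa using h1
      have hfne : f ≠ 0 := by
        intro h0
        rw [h0, map_zero] at hGig
        exact hgne hGig.symm
      have hfn_pos : 0 < ‖f‖ := norm_pos_iff.2 hfne
      have hinner : ⟪S g, T f⟫ = ‖f‖ ^ 2 := by
        rw [real_inner_comm, gTS, ← hfdef, real_inner_self_eq_norm_sq]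
      have hTf_ne : T f ≠ 0 := by
        intro h0
        rw [h0, inner_zero_right] at hinner
        nlinarith
      have hvV' : T f ∈ V := by
        rw [← SetLike.mem_coe, ← hTr]; exact ⟨f, rfl⟩
      refine ⟨⟨⟨T f, hvV'⟩, fun h0 => hTf_ne (by simpa [Submodule.mk_eq_zero] using h0)⟩, ?_⟩
      dsimp only
      rw [← hgv, hinner]
      have hgn : ‖g‖ ≤ ‖Ginv‖ * ‖f‖ := by
        rw [← hGig]; exact Ginv.le_opNorm f
      have hSg_pos : 0 < ‖S g‖ := norm_pos_iff.2 (by rw [hgv]; exact hvne)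
      have hTf_pos : 0 < ‖T f‖ := norm_pos_iff.2 hTf_ne
      have hden_le : ‖S g‖ * ‖T f‖ ≤ Real.sqrt (‖Gφφ‖ * ‖Gψψ‖) * ‖Ginv‖ * ‖f‖ ^ 2 := by
        calc ‖S g‖ * ‖T f‖
            ≤ (Real.sqrt ‖Gψψ‖ * (‖Ginv‖ * ‖f‖)) * (Real.sqrt ‖Gφφ‖ * ‖f‖) := by
              apply mul_le_mul ((hSn g).trans ?_) (hTn f) (norm_nonneg _) (by positivity)
              have h4 : (0:ℝ) ≤ Real.sqrt ‖Gψψ‖ := Real.sqrt_nonneg _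
              nlinarith [hgn]
        _ = Real.sqrt ‖Gφφ‖ * Real.sqrt ‖Gψψ‖ * ‖Ginv‖ * ‖f‖ ^ 2 := by ring
        _ = Real.sqrt (‖Gφφ‖ * ‖Gψψ‖) * ‖Ginv‖ * ‖f‖ ^ 2 := by rw [hsqrt_eq]
      calc ‖Ginv‖⁻¹ / Real.sqrt (‖Gφφ‖ * ‖Gψψ‖)
          = ‖f‖ ^ 2 / (Real.sqrt (‖Gφφ‖ * ‖Gψψ‖) * ‖Ginv‖ * ‖f‖ ^ 2) := by
            field_simp
      _ ≤ ‖f‖ ^ 2 / (‖S g‖ * ‖T f‖) := by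
            apply div_le_div_of_nonneg_left (by positivity) (by positivity) hden_le
end

section
/- Let H be a real Hilbert space and I, K countable index sets. Let Θ = (θ_i)_{i∈I} and Ξ = (ξ_k)_{k∈K} be families in H such that the combined family Θ ∪ Ξ (indexed by the disjoint union I ⊔ K) is a Riesz basis for a closed subspace W of H. Let Φ̃ = (φ̃_i)_{i∈I} be a Riesz basis for a closed subspace Ṽ of H such that ⟨θ_i, φ̃_{i'}⟩_H = δ_{i i'} for all i, i' ∈ I. Define δ := the inf-sup constant of the pair (closed span of Θ, Ṽ), and ε := sup over nonzero v in the span of Θ and nonzero w in the span of Ξ of ⟨v,w⟩_H/(‖v‖_H ‖w‖_H). Assume δ > 0 and ε < 1. Then for each k ∈ K the series ψ_k := ξ_k − Σ_{i∈I} ⟨ξ_k, φ̃_i⟩_H θ_i converges in H, and the family Ψ := (ψ_k)_{k∈K} is a Riesz basis for W ∩ Ṽ^⊥. -/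
open scoped RealInnerProductSpace

/-- `sup_{0≠v∈span S} sup_{0≠w∈span T} ⟨v,w⟩_H/(‖v‖_H ‖w‖_H)`. -/
noncomputable def spanAngle {H : Type*} [NormedAddCommGroup H] [InnerProductSpace ℝ H]
    (S T : Set H) : ℝ :=
  sSup {r : ℝ | ∃ v ∈ Submodule.span ℝ S, ∃ w ∈ Submodule.span ℝ T,
    v ≠ 0 ∧ w ≠ 0 ∧ r = ⟪v, w⟫ / (‖v‖ * ‖w‖)}


section Aux
variable {H : Type*} [NormedAddCommGroup H] [InnerProductSpace ℝ H]

/-- Truncation of a function to a finset, as a finsupp. -/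
noncomputable def trunc {ι : Type*} (f : ι → ℝ) (s : Finset ι) : ι →₀ ℝ :=
  haveI := Classical.decEq ι
  Finsupp.onFinset s (fun i => if i ∈ s then f i else 0) (by
    intro i hi
    by_contra h
    simp [h] at hi)

lemma trunc_sum {ι M : Type*} [AddCommMonoid M] (f : ι → ℝ) (s : Finset ι)
    (g : ι → ℝ → M) (hg : ∀ i, g i 0 = 0) :
    ∑ i ∈ (trunc f s).support, g i (trunc f s i) = ∑ i ∈ s, g i (f i) := by
  classical
  have hsub : (trunc f s).support ⊆ s := Finsupp.support_onFinset_subset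
  rw [Finset.sum_subset hsub]
  · refine Finset.sum_congr rfl fun i hi => ?_
    simp [trunc, Finsupp.onFinset_apply, hi]
  · intro i _ hi
    have : trunc f s i = 0 := Finsupp.notMem_support_iff.mp hi
    rw [this, hg]

/-- The finset version of the upper Riesz bound. -/
lemma upper_finset {ι : Type*} {φ : ι → H} {B : ℝ}
    (hB : ∀ c : ι →₀ ℝ, ‖∑ i ∈ c.support, c i • φ i‖ ^ 2 ≤ B * ∑ i ∈ c.support, c i ^ 2)
    (f : ι → ℝ) (s : Finset ι) :
    ‖∑ i ∈ s, f i • φ i‖ ^ 2 ≤ B * ∑ i ∈ s, f i ^ 2 := by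
  have h := hB (trunc f s)
  rwa [trunc_sum f s (fun i c => c • φ i) (by simp),
    trunc_sum f s (fun _ c => c ^ 2) (by simp)] at h

end Aux

section Aux2
set_option linter.unusedSectionVars false
variable {H : Type*} [NormedAddCommGroup H] [InnerProductSpace ℝ H] [CompleteSpace H]
variable {ι : Type*} {φ : ι → H} {B : ℝ}

lemma synth_summable (hB : ∀ (f : ι → ℝ) (s : Finset ι),
      ‖∑ i ∈ s, f i • φ i‖ ^ 2 ≤ B * ∑ i ∈ s, f i ^ 2)
    {f : ι → ℝ} (hf : Summable (fun i => f i ^ 2)) :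
    Summable (fun i => f i • φ i) := by
  rcases le_or_gt B 0 with hB0 | hB0
  · -- then all partial sums are 0
    have hz : ∀ i, f i • φ i = 0 := by
      intro i
      have h := hB f {i}
      simp only [Finset.sum_singleton] at h
      have h2 : ‖f i • φ i‖ ^ 2 ≤ 0 :=
        h.trans (mul_nonpos_of_nonpos_of_nonneg hB0 (sq_nonneg _))
      have := sq_nonneg ‖f i • φ i‖
      have : ‖f i • φ i‖ ^ 2 = 0 := le_antisymm h2 this
      simpa [pow_eq_zero_iff] using this
    exact (summable_congr (fun i => (hz i).symm) ).mp summable_zero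
  rw [summable_iff_vanishing]
  intro e he
  rcases Metric.mem_nhds_iff.mp he with ⟨ε, hε, hball⟩
  have hvan := (summable_iff_vanishing.mp hf) {x : ℝ | |x| < ε ^ 2 / B}
    (by
      have : (0:ℝ) ∈ {x : ℝ | |x| < ε ^ 2 / B} := by
        simp [abs_of_nonneg, div_pos (pow_pos hε 2) hB0]
      exact mem_nhds_iff.mpr ⟨_, fun x hx => hx, isOpen_lt (continuous_abs) continuous_const, this⟩)
  rcases hvan with ⟨s, hs⟩
  refine ⟨s, fun t ht => ?_⟩
  apply hball
  have h1 : ‖∑ i ∈ t, f i • φ i‖ ^ 2 ≤ B * ∑ i ∈ t, f i ^ 2 := hB f t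
  have h2 : |∑ i ∈ t, f i ^ 2| < ε ^ 2 / B := hs t ht
  have h3 : ∑ i ∈ t, f i ^ 2 < ε ^ 2 / B := (le_abs_self _).trans_lt h2
  have h4 : ‖∑ i ∈ t, f i • φ i‖ ^ 2 < ε ^ 2 := by
    calc ‖∑ i ∈ t, f i • φ i‖ ^ 2 ≤ B * ∑ i ∈ t, f i ^ 2 := h1
    _ < B * (ε ^ 2 / B) := by exact (mul_lt_mul_iff_right₀ hB0).mpr h3
    _ = ε ^ 2 := by field_simp
  simp only [Metric.mem_ball, dist_zero_right]
  exact lt_of_pow_lt_pow_left₀ 2 hε.le h4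

lemma synth_norm (hB : ∀ (f : ι → ℝ) (s : Finset ι),
      ‖∑ i ∈ s, f i • φ i‖ ^ 2 ≤ B * ∑ i ∈ s, f i ^ 2)
    (hB0 : 0 ≤ B) {f : ι → ℝ} (hf : Summable (fun i => f i ^ 2)) :
    ‖∑' i, f i • φ i‖ ^ 2 ≤ B * ∑' i, f i ^ 2 := by
  have hsum := synth_summable hB hf
  have htend2 : Filter.Tendsto (fun s : Finset ι => ‖∑ i ∈ s, f i • φ i‖ ^ 2)
      Filter.atTop (nhds (‖∑' i, f i • φ i‖ ^ 2)) :=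
    ((continuous_norm.tendsto _).comp hsum.hasSum).pow 2
  refine le_of_tendsto htend2 (Filter.Eventually.of_forall fun s => ?_)
  calc ‖∑ i ∈ s, f i • φ i‖ ^ 2 ≤ B * ∑ i ∈ s, f i ^ 2 := hB f s
  _ ≤ B * ∑' i, f i ^ 2 := by
      apply mul_le_mul_of_nonneg_left _ hB0
      exact hf.sum_le_tsum s (fun i _ => sq_nonneg _)

lemma bessel (hB : ∀ (f : ι → ℝ) (s : Finset ι),
      ‖∑ i ∈ s, f i • φ i‖ ^ 2 ≤ B * ∑ i ∈ s, f i ^ 2)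
    (hB0 : 0 ≤ B) (v : H) :
    Summable (fun i => ⟪v, φ i⟫ ^ 2) ∧ ∑' i, ⟪v, φ i⟫ ^ 2 ≤ B * ‖v‖ ^ 2 := by
  set a : ι → ℝ := fun i => ⟪v, φ i⟫ with ha
  have key : ∀ s : Finset ι, ∑ i ∈ s, a i ^ 2 ≤ B * ‖v‖ ^ 2 := by
    intro s
    set S := ∑ i ∈ s, a i ^ 2 with hS
    have hS0 : 0 ≤ S := Finset.sum_nonneg fun i _ => sq_nonneg _
    rcases eq_or_lt_of_le hS0 with h0 | h0
    · rw [← h0]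
      positivity
    have hinner : S = ⟪v, ∑ i ∈ s, a i • φ i⟫ := by
      rw [inner_sum]
      simp only [real_inner_smul_right]
      rw [hS]
      exact Finset.sum_congr rfl fun i _ => sq (a i)
    have hcs : S ≤ ‖v‖ * ‖∑ i ∈ s, a i • φ i‖ := by
      rw [hinner]
      exact real_inner_le_norm _ _
    have hsq : S ^ 2 ≤ ‖v‖ ^ 2 * ‖∑ i ∈ s, a i • φ i‖ ^ 2 := by
      calc S ^ 2 ≤ (‖v‖ * ‖∑ i ∈ s, a i • φ i‖) ^ 2 := by
            apply pow_le_pow_left₀ hS0 hcs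
      _ = ‖v‖ ^ 2 * ‖∑ i ∈ s, a i • φ i‖ ^ 2 := by ring
    have h2 : S ^ 2 ≤ ‖v‖ ^ 2 * (B * S) :=
      hsq.trans (mul_le_mul_of_nonneg_left (hB a s) (sq_nonneg _))
    have h3 : S * S ≤ (B * ‖v‖ ^ 2) * S := by
      calc S * S = S ^ 2 := (sq S).symm
      _ ≤ ‖v‖ ^ 2 * (B * S) := h2
      _ = (B * ‖v‖ ^ 2) * S := by ring
    exact le_of_mul_le_mul_right (by simpa [mul_comm] using h3) h0
  have hsummable : Summable (fun i => a i ^ 2) :=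
    summable_of_sum_le (fun i => sq_nonneg _) key
  exact ⟨hsummable, Summable.tsum_le_of_sum_le hsummable key⟩

lemma lower_finset {ι : Type*} {φ : ι → H} {A : ℝ}
    (hA : ∀ c : ι →₀ ℝ, A * ∑ i ∈ c.support, c i ^ 2 ≤ ‖∑ i ∈ c.support, c i • φ i‖ ^ 2)
    (f : ι → ℝ) (s : Finset ι) :
    A * ∑ i ∈ s, f i ^ 2 ≤ ‖∑ i ∈ s, f i • φ i‖ ^ 2 := by
  have h := hA (trunc f s)
  rwa [trunc_sum f s (fun i c => c • φ i) (by simp),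
    trunc_sum f s (fun _ c => c ^ 2) (by simp)] at h

end Aux2

lemma sumElim_sum {I K M : Type*} [AddCommMonoid M] (d : I →₀ ℝ) (c : K →₀ ℝ)
    (g : I ⊕ K → ℝ → M) (hg : ∀ x, g x 0 = 0) :
    ∑ x ∈ (d.sumElim c).support, g x (d.sumElim c x) =
      ∑ i ∈ d.support, g (Sum.inl i) (d i) + ∑ k ∈ c.support, g (Sum.inr k) (c k) := by
  classical
  set t : Finset (I ⊕ K) :=
    d.support.map ⟨Sum.inl, Sum.inl_injective⟩ ∪ c.support.map ⟨Sum.inr, Sum.inr_injective⟩ with ht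
  have hsub : (d.sumElim c).support ⊆ t := by
    intro x hx
    have hx0 : d.sumElim c x ≠ 0 := Finsupp.mem_support_iff.mp hx
    cases x with
    | inl i =>
      rw [Finsupp.sumElim_inl] at hx0
      exact Finset.mem_union_left _ (Finset.mem_map.mpr ⟨i, Finsupp.mem_support_iff.mpr hx0, rfl⟩)
    | inr k =>
      rw [Finsupp.sumElim_inr] at hx0
      exact Finset.mem_union_right _ (Finset.mem_map.mpr ⟨k, Finsupp.mem_support_iff.mpr hx0, rfl⟩)
  rw [Finset.sum_subset hsub (by
    intro x _ hx
    rw [Finsupp.notMem_support_iff.mp hx, hg])]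
  have hdisj : Disjoint (d.support.map ⟨Sum.inl, Sum.inl_injective⟩)
      (c.support.map ⟨Sum.inr, Sum.inr_injective⟩) := by
    rw [Finset.disjoint_left]
    rintro x hx1 hx2
    rcases Finset.mem_map.mp hx1 with ⟨i, _, rfl⟩
    rcases Finset.mem_map.mp hx2 with ⟨k, _, hk⟩
    exact Sum.inl_ne_inr hk.symm
  rw [ht, Finset.sum_union hdisj, Finset.sum_map, Finset.sum_map]
  simp only [Function.Embedding.coeFn_mk, Finsupp.sumElim_inl, Finsupp.sumElim_inr]

theorem stmt6 {H : Type*} [NormedAddCommGroup H] [InnerProductSpace ℝ H] [CompleteSpace H]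
    {I K : Type*} [Countable I] [Countable K] [DecidableEq I]
    (θ : I → H) (ξ : K → H) (W V : Submodule ℝ H)
    (hWc : IsClosed (W : Set H)) (hVc : IsClosed (V : Set H))
    (hΘΞ : IsRieszBasis (Sum.elim θ ξ) W)
    (φt : I → H) (hφt : IsRieszBasis φt V)
    (hbiorth : ∀ i i' : I, ⟪θ i, φt i'⟫ = if i = i' then (1 : ℝ) else 0)
    (hδ : 0 < infSupConst (Submodule.span ℝ (Set.range θ)).topologicalClosure V)
    (hε : spanAngle (Set.range θ) (Set.range ξ) < 1) :
    ∃ ψ : K → H,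
      (∀ k : K, HasSum (fun i : I => ⟪ξ k, φt i⟫ • θ i) (ξ k - ψ k)) ∧
      IsRieszBasis ψ (W ⊓ Vᗮ) := by
  classical
  obtain ⟨A, B, hA, hAB, hspanW, hRB⟩ := hΘΞ
  obtain ⟨Aφ, Bφ, hAφ, hABφ, hspanV, hRBφ⟩ := hφt
  have hB : 0 < B := hA.trans_le hAB
  have hBφ : 0 < Bφ := hAφ.trans_le hABφ
  -- finset-level bounds
  have hup : ∀ (f : I ⊕ K → ℝ) (s : Finset (I ⊕ K)),
      ‖∑ x ∈ s, f x • Sum.elim θ ξ x‖ ^ 2 ≤ B * ∑ x ∈ s, f x ^ 2 :=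
    upper_finset (fun c => (hRB c).2)
  have hupφ : ∀ (f : I → ℝ) (s : Finset I),
      ‖∑ i ∈ s, f i • φt i‖ ^ 2 ≤ Bφ * ∑ i ∈ s, f i ^ 2 :=
    upper_finset (fun c => (hRBφ c).2)
  have hupθ : ∀ (f : I → ℝ) (s : Finset I),
      ‖∑ i ∈ s, f i • θ i‖ ^ 2 ≤ B * ∑ i ∈ s, f i ^ 2 := by
    intro f s
    have h := hup (Sum.elim f 0) (s.map ⟨Sum.inl, Sum.inl_injective⟩)
    rwa [Finset.sum_map, Finset.sum_map] at h
  have hupξ : ∀ (f : K → ℝ) (s : Finset K),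
      ‖∑ k ∈ s, f k • ξ k‖ ^ 2 ≤ B * ∑ k ∈ s, f k ^ 2 := by
    intro f s
    have h := hup (Sum.elim 0 f) (s.map ⟨Sum.inr, Sum.inr_injective⟩)
    rwa [Finset.sum_map, Finset.sum_map] at h
  -- Bessel coefficients
  set a : H → I → ℝ := fun v i => ⟪v, φt i⟫ with ha
  have hbes : ∀ v : H, Summable (fun i => a v i ^ 2) ∧ ∑' i, a v i ^ 2 ≤ Bφ * ‖v‖ ^ 2 :=
    fun v => bessel hupφ hBφ.le v
  have hsummQ : ∀ v : H, Summable (fun i => a v i • θ i) :=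
    fun v => synth_summable hupθ (hbes v).1
  -- The projection Q
  set Qlin : H →ₗ[ℝ] H :=
    { toFun := fun v => ∑' i, a v i • θ i
      map_add' := by
        intro u v
        have heq : (fun i => a (u + v) i • θ i) = fun i => a u i • θ i + a v i • θ i := by
          funext i
          simp only [ha, inner_add_left, add_smul]
        simp only [heq]
        exact ((hsummQ u).hasSum.add (hsummQ v).hasSum).tsum_eq
      map_smul' := by
        intro r v
        have heq : (fun i => a (r • v) i • θ i) = fun i => r • (a v i • θ i) := by
          funext i
          simp only [ha, real_inner_smul_left, smul_smul]
        simp only [heq, RingHom.id_apply]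
        exact (((hsummQ v).hasSum.const_smul r)).tsum_eq } with hQlin
  set M : ℝ := Real.sqrt (B * Bφ) with hM
  have hM0 : 0 ≤ M := Real.sqrt_nonneg _
  have hQbound : ∀ v, ‖Qlin v‖ ≤ M * ‖v‖ := by
    intro v
    have h1 : ‖Qlin v‖ ^ 2 ≤ B * ∑' i, a v i ^ 2 := synth_norm hupθ hB.le (hbes v).1
    have h2 : ‖Qlin v‖ ^ 2 ≤ (M * ‖v‖) ^ 2 := by
      have h3 : B * ∑' i, a v i ^ 2 ≤ B * (Bφ * ‖v‖ ^ 2) :=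
        mul_le_mul_of_nonneg_left (hbes v).2 hB.le
      have h4 : (M * ‖v‖) ^ 2 = (B * Bφ) * ‖v‖ ^ 2 := by
        rw [mul_pow, hM, Real.sq_sqrt (by positivity)]
      rw [h4]
      calc ‖Qlin v‖ ^ 2 ≤ B * (Bφ * ‖v‖ ^ 2) := h1.trans h3
      _ = (B * Bφ) * ‖v‖ ^ 2 := by ring
    have := Real.sqrt_le_sqrt h2
    rwa [Real.sqrt_sq (norm_nonneg _), Real.sqrt_sq (by positivity)] at this
  set Q : H →L[ℝ] H := Qlin.mkContinuous M hQbound with hQ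
  have hQapply : ∀ v, Q v = ∑' i, a v i • θ i := fun v => rfl
  have hQhasSum : ∀ v, HasSum (fun i => a v i • θ i) (Q v) := fun v => (hsummQ v).hasSum
  -- biorthogonality facts
  have hQθ : ∀ j, Q (θ j) = θ j := by
    intro j
    refine (hQhasSum (θ j)).unique ?_
    have heq : (fun i => a (θ j) i • θ i) = fun i => if i = j then θ j else 0 := by
      funext i
      by_cases h : i = j
      · subst h
        simp [ha, hbiorth i i]
      · rw [if_neg h]
        have hz : a (θ j) i = 0 := by
          show (⟪θ j, φt i⟫ : ℝ) = 0
          rw [hbiorth j i]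
          exact if_neg (fun hji => h hji.symm)
        rw [hz, zero_smul]
    rw [heq]
    exact hasSum_ite_eq j (θ j)
  have hQinner : ∀ v j, ⟪φt j, Q v⟫ = a v j := by
    intro v j
    have h1 : HasSum (fun i => ⟪φt j, a v i • θ i⟫) ⟪φt j, Q v⟫ :=
      (innerSL ℝ (φt j)).hasSum (hQhasSum v)
    have heq : (fun i => ⟪φt j, a v i • θ i⟫) = fun i => if i = j then a v j else 0 := by
      funext i
      rw [real_inner_smul_right, real_inner_comm, hbiorth i j]
      by_cases h : i = j
      · subst h; simp
      · simp [h]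
    rw [heq] at h1
    exact h1.unique (hasSum_ite_eq j (a v j))
  -- membership facts
  have hφtV : ∀ i, φt i ∈ V := by
    intro i
    rw [← hspanV]
    exact Submodule.le_topologicalClosure _ (Submodule.subset_span ⟨i, rfl⟩)
  have hQV : ∀ v ∈ Vᗮ, Q v = 0 := by
    intro v hv
    have hz : ∀ i, a v i = 0 := by
      intro i
      have h0 := Submodule.inner_right_of_mem_orthogonal (hφtV i) hv
      show (⟪v, φt i⟫ : ℝ) = 0
      rw [real_inner_comm]
      exact h0
    rw [hQapply v]
    simp [hz]
  have hmemVperp : ∀ x : H, (∀ i, ⟪φt i, x⟫ = 0) → x ∈ Vᗮ := by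
    intro x hx
    rw [Submodule.mem_orthogonal]
    intro u hu
    rw [← hspanV] at hu
    have hle : Submodule.span ℝ (Set.range φt) ≤ LinearMap.ker ((innerSL ℝ x : H →L[ℝ] ℝ) : H →ₗ[ℝ] ℝ) := by
      rw [Submodule.span_le]
      rintro _ ⟨i, rfl⟩
      simp only [SetLike.mem_coe, LinearMap.mem_ker, ContinuousLinearMap.coe_coe, innerSL_apply_apply]
      rw [real_inner_comm]
      exact hx i
    have hker : u ∈ LinearMap.ker ((innerSL ℝ x : H →L[ℝ] ℝ) : H →ₗ[ℝ] ℝ) :=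
      Submodule.topologicalClosure_minimal _ hle (ContinuousLinearMap.isClosed_ker (innerSL ℝ x)) hu
    have : ⟪x, u⟫ = 0 := hker
    rw [real_inner_comm]
    exact this
  have hclθW : (Submodule.span ℝ (Set.range θ)).topologicalClosure ≤ W := by
    rw [← hspanW]
    apply Submodule.topologicalClosure_mono
    apply Submodule.span_mono
    rintro _ ⟨i, rfl⟩
    exact ⟨Sum.inl i, rfl⟩
  have hQW : ∀ v, Q v ∈ W := by
    intro v
    apply hclθW
    have hmem : ∀ s : Finset I, ∑ i ∈ s, a v i • θ i ∈ Submodule.span ℝ (Set.range θ) :=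
      fun s => Submodule.sum_mem _ fun i _ =>
        Submodule.smul_mem _ _ (Submodule.subset_span ⟨i, rfl⟩)
    have : Q v ∈ closure (Submodule.span ℝ (Set.range θ) : Set H) :=
      mem_closure_of_tendsto (hQhasSum v) (Filter.Eventually.of_forall hmem)
    rwa [← Submodule.topologicalClosure_coe] at this
  have hξW : ∀ k, ξ k ∈ W := by
    intro k
    rw [← hspanW]
    exact Submodule.le_topologicalClosure _ (Submodule.subset_span ⟨Sum.inr k, rfl⟩)
  -- define ψ
  set ψ : K → H := fun k => ξ k - Q (ξ k) with hψ
  refine ⟨ψ, ?_, ?_⟩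
  · intro k
    have : ξ k - ψ k = Q (ξ k) := sub_sub_cancel _ _
    rw [this]
    exact hQhasSum (ξ k)
  have hψV : ∀ k, ψ k ∈ Vᗮ := by
    intro k
    apply hmemVperp
    intro i
    have h1 : (⟪φt i, ψ k⟫ : ℝ) = ⟪φt i, ξ k⟫ - ⟪φt i, Q (ξ k)⟫ := by
      show (⟪φt i, ξ k - Q (ξ k)⟫ : ℝ) = _
      exact inner_sub_right _ _ _
    rw [h1, hQinner (ξ k) i]
    have h2 : a (ξ k) i = ⟪φt i, ξ k⟫ := real_inner_comm _ _
    rw [h2]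
    ring
  have hψW : ∀ k, ψ k ∈ W := fun k => Submodule.sub_mem _ (hξW k) (hQW (ξ k))
  -- the key identity: finite combinations of ψ
  have hcomb : ∀ c : K →₀ ℝ,
      ∑ k ∈ c.support, c k • ψ k = (∑ k ∈ c.support, c k • ξ k) - Q (∑ k ∈ c.support, c k • ξ k) := by
    intro c
    rw [map_sum]
    rw [← Finset.sum_sub_distrib]
    refine Finset.sum_congr rfl fun k _ => ?_
    show c k • (ξ k - Q (ξ k)) = c k • ξ k - Q (c k • ξ k)
    rw [smul_sub, map_smul]
  refine ⟨A, (1 + M) ^ 2 * B, hA, ?_, ?_, ?_⟩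
  · calc A ≤ B := hAB
    _ = 1 * B := (one_mul B).symm
    _ ≤ (1 + M) ^ 2 * B := by nlinarith [hM0, hB.le, mul_nonneg (mul_nonneg hM0 hM0) hB.le, mul_nonneg hM0 hB.le]
  · -- span equality
    apply le_antisymm
    · apply Submodule.topologicalClosure_minimal
      · rw [Submodule.span_le]
        rintro _ ⟨k, rfl⟩
        simp only [SetLike.mem_coe, Submodule.mem_inf]
        exact ⟨hψW k, hψV k⟩
      · rw [Submodule.coe_inf]
        exact hWc.inter (Submodule.isClosed_orthogonal _)
    · rintro v ⟨hv1, hv2⟩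
      set T : H →L[ℝ] H := ContinuousLinearMap.id ℝ H - Q with hT
      have hTv : T v = v := by
        simp only [hT, ContinuousLinearMap.sub_apply, ContinuousLinearMap.id_apply]
        rw [hQV v hv2, sub_zero]
      set C : Set H := ((Submodule.span ℝ (Set.range ψ)).topologicalClosure : Set H) with hC
      have hCclosed : IsClosed C := Submodule.isClosed_topologicalClosure _
      have hTspan : (Submodule.span ℝ (Set.range (Sum.elim θ ξ)) : Set H) ⊆ T ⁻¹' C := by
        intro x hx
        induction hx using Submodule.span_induction with
        | mem x hx =>
          rcases hx with ⟨y, rfl⟩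
          cases y with
          | inl i =>
            simp only [Set.mem_preimage, hT, ContinuousLinearMap.sub_apply,
              ContinuousLinearMap.id_apply, Sum.elim_inl]
            rw [hQθ i, sub_self]
            exact (Submodule.span ℝ (Set.range ψ)).topologicalClosure.zero_mem
          | inr k =>
            simp only [Set.mem_preimage, hT, ContinuousLinearMap.sub_apply,
              ContinuousLinearMap.id_apply, Sum.elim_inr]
            have : ξ k - Q (ξ k) = ψ k := rfl
            rw [this]
            exact Submodule.le_topologicalClosure _ (Submodule.subset_span ⟨k, rfl⟩)
        | zero =>
          simp only [Set.mem_preimage, map_zero]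
          exact (Submodule.span ℝ (Set.range ψ)).topologicalClosure.zero_mem
        | add x y _ _ hx hy =>
          simp only [Set.mem_preimage, map_add]
          exact Submodule.add_mem _ hx hy
        | smul r x _ hx =>
          simp only [Set.mem_preimage, map_smul]
          exact Submodule.smul_mem _ r hx
      have hWsub : (W : Set H) ⊆ T ⁻¹' C := by
        rw [← hspanW, Submodule.topologicalClosure_coe]
        exact closure_minimal hTspan (hCclosed.preimage T.continuous)
      have := hWsub hv1
      rw [Set.mem_preimage, hTv] at this
      exact this
  · -- Riesz bounds
    intro c
    set u : H := ∑ k ∈ c.support, c k • ξ k with hu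
    have hcombc : ∑ k ∈ c.support, c k • ψ k = u - Q u := hcomb c
    constructor
    · -- lower bound
      rw [hcombc]
      have hlowfin : ∀ s' : Finset I,
          A * (∑ i ∈ s', (- a u i) ^ 2 + ∑ k ∈ c.support, c k ^ 2) ≤
            ‖(∑ i ∈ s', (- a u i) • θ i) + u‖ ^ 2 := by
        intro s'
        set d : I →₀ ℝ := trunc (fun i => - a u i) s' with hd
        have h := (hRB (d.sumElim c)).1
        rw [sumElim_sum d c (fun x r => r ^ 2) (by intro x; simp),
          sumElim_sum d c (fun x r => r • Sum.elim θ ξ x) (by intro x; simp)] at h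
        simp only [Sum.elim_inl, Sum.elim_inr] at h
        rwa [trunc_sum (fun i => - a u i) s' (fun i r => r ^ 2) (by intro i; simp),
          trunc_sum (fun i => - a u i) s' (fun i r => r • θ i) (by intro i; simp), hu] at h
      have htends : Filter.Tendsto
          (fun s' : Finset I => ‖(∑ i ∈ s', (- a u i) • θ i) + u‖ ^ 2)
          Filter.atTop (nhds (‖u - Q u‖ ^ 2)) := by
        have h1 : HasSum (fun i => (- a u i) • θ i) (- Q u) := by
          have := (hQhasSum u).neg
          simpa [neg_smul] using this
        have h2 : Filter.Tendsto (fun s' : Finset I => (∑ i ∈ s', (- a u i) • θ i) + u)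
            Filter.atTop (nhds (- Q u + u)) := h1.add_const u
        have h3 : - Q u + u = u - Q u := by abel
        rw [h3] at h2
        exact ((continuous_norm.tendsto _).comp h2).pow 2
      refine ge_of_tendsto htends (Filter.Eventually.of_forall fun s' => ?_)
      refine le_trans ?_ (hlowfin s')
      apply mul_le_mul_of_nonneg_left _ hA.le
      have : 0 ≤ ∑ i ∈ s', (- a u i) ^ 2 := Finset.sum_nonneg fun i _ => sq_nonneg _
      linarith
    · -- upper bound
      rw [hcombc]
      have h1 : ‖u - Q u‖ ≤ (1 + M) * ‖u‖ := by
        calc ‖u - Q u‖ ≤ ‖u‖ + ‖Q u‖ := norm_sub_le _ _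
        _ ≤ ‖u‖ + M * ‖u‖ := by
            have hb : ‖Q u‖ ≤ M * ‖u‖ := hQbound u
            linarith [norm_nonneg u]
        _ = (1 + M) * ‖u‖ := by ring
      have h2 : ‖u‖ ^ 2 ≤ B * ∑ k ∈ c.support, c k ^ 2 := hupξ c c.support
      calc ‖u - Q u‖ ^ 2 ≤ ((1 + M) * ‖u‖) ^ 2 := by
            apply pow_le_pow_left₀ (norm_nonneg _) h1
      _ = (1 + M) ^ 2 * ‖u‖ ^ 2 := by ring
      _ ≤ (1 + M) ^ 2 * (B * ∑ k ∈ c.support, c k ^ 2) :=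
            mul_le_mul_of_nonneg_left h2 (by positivity)
      _ = (1 + M) ^ 2 * B * ∑ k ∈ c.support, c k ^ 2 := by ring
end

section
/- Let H be a real Hilbert space and P : H → H a nonzero bounded linear projector (P∘P = P). Then range P and range P* are closed subspaces of H, and the inf-sup constant of the pair (range P*, range P) equals ‖P‖^{-1}; the inf-sup constant of the pair (range P, range P*) also equals ‖P‖^{-1}. -/
open scoped RealInnerProductSpace

section Aux

variable {H : Type*} [NormedAddCommGroup H] [InnerProductSpace ℝ H] [CompleteSpace H]

lemma aux_fix (P : H →L[ℝ] H) (hP : P.comp P = P) {x : H}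
    (hx : x ∈ LinearMap.range (P : H →ₗ[ℝ] H)) : P x = x := by
  obtain ⟨y, rfl⟩ := hx
  have := DFunLike.congr_fun hP y
  simpa using this

lemma aux_closed (P : H →L[ℝ] H) (hP : P.comp P = P) :
    IsClosed ((LinearMap.range (P : H →ₗ[ℝ] H) : Submodule ℝ H) : Set H) := by
  have hset : ((LinearMap.range (P : H →ₗ[ℝ] H) : Submodule ℝ H) : Set H) = {x | P x = x} := by
    ext x
    constructor
    · intro hx; exact aux_fix P hP hx
    · intro hx; exact ⟨x, hx⟩
  rw [hset]
  exact isClosed_eq P.continuous continuous_id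

lemma aux_adj_idem (P : H →L[ℝ] H) (hP : P.comp P = P) :
    (ContinuousLinearMap.adjoint P).comp (ContinuousLinearMap.adjoint P)
      = ContinuousLinearMap.adjoint P := by
  rw [← ContinuousLinearMap.adjoint_comp, hP]

lemma aux_adj_norm (P : H →L[ℝ] H) : ‖ContinuousLinearMap.adjoint P‖ = ‖P‖ :=
  LinearIsometryEquiv.norm_map ContinuousLinearMap.adjoint P

lemma aux_infSup (P : H →L[ℝ] H) (hP : P.comp P = P) (hP0 : P ≠ 0) :
    infSupConst (LinearMap.range (ContinuousLinearMap.adjoint P : H →ₗ[ℝ] H)) (LinearMap.range (P : H →ₗ[ℝ] H))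
      = ‖P‖⁻¹ := by
  set Pa := ContinuousLinearMap.adjoint P with hPa
  have hPaP : Pa.comp Pa = Pa := aux_adj_idem P hP
  have hnorm : ‖Pa‖ = ‖P‖ := aux_adj_norm P
  have hPpos : (0:ℝ) < ‖P‖ := norm_pos_iff.mpr hP0
  set V := LinearMap.range (Pa : H →ₗ[ℝ] H) with hV
  set W := LinearMap.range (P : H →ₗ[ℝ] H) with hW
  -- inner product identity: for v ∈ V, ⟪v, x⟫ behaves nicely
  have hfixV : ∀ x ∈ V, Pa x = x := fun x hx => aux_fix Pa hPaP hx
  have hfixW : ∀ x ∈ W, P x = x := fun x hx => aux_fix P hP hx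
  have hinner : ∀ v ∈ V, ∀ x : H, ⟪v, P x⟫ = ⟪v, x⟫ := by
    intro v hv x
    rw [← ContinuousLinearMap.adjoint_inner_left, ← hPa, hfixV v hv]
  -- nonemptiness
  obtain ⟨x₀, hx₀⟩ : ∃ x, P x ≠ 0 := by
    by_contra h
    push_neg at h
    exact hP0 (ContinuousLinearMap.ext fun x => by simpa using h x)
  haveI hWne : Nonempty {w : W // w ≠ 0} :=
    ⟨⟨⟨P x₀, ⟨x₀, rfl⟩⟩, fun h => hx₀ (by simpa using congrArg Subtype.val h)⟩⟩
  obtain ⟨y₀, hy₀⟩ : ∃ y, Pa y ≠ 0 := by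
    by_contra h
    push_neg at h
    have : Pa = 0 := ContinuousLinearMap.ext fun x => by simpa using h x
    rw [this, norm_zero] at hnorm
    exact hPpos.ne (hnorm)
  haveI hVne : Nonempty {v : V // v ≠ 0} :=
    ⟨⟨⟨Pa y₀, ⟨y₀, rfl⟩⟩, fun h => hy₀ (by simpa using congrArg Subtype.val h)⟩⟩
  -- boundedness above of the sup families
  have hbdd : ∀ v : {v : V // v ≠ 0}, BddAbove (Set.range fun w : {w : W // w ≠ 0} =>
      ⟪((v : V) : H), ((w : W) : H)⟫ / (‖((v : V) : H)‖ * ‖((w : W) : H)‖)) := by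
    intro v
    refine ⟨1, ?_⟩
    rintro r ⟨w, rfl⟩
    exact div_le_one_of_le₀ (real_inner_le_norm _ _) (by positivity)
  -- lower bound for each sup
  have hlow : ∀ v : {v : V // v ≠ 0}, ‖P‖⁻¹ ≤ ⨆ w : {w : W // w ≠ 0},
      ⟪((v : V) : H), ((w : W) : H)⟫ / (‖((v : V) : H)‖ * ‖((w : W) : H)‖) := by
    rintro ⟨⟨v, hvV⟩, hvne⟩
    have hv0 : v ≠ 0 := by simpa [Submodule.mk_eq_zero] using hvne
    have hvnorm : (0:ℝ) < ‖v‖ := norm_pos_iff.mpr hv0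
    have hvv : ⟪v, P v⟫ = ‖v‖ ^ 2 := by
      rw [hinner v hvV v, real_inner_self_eq_norm_sq]
    have hPv0 : P v ≠ 0 := by
      intro h
      rw [h, inner_zero_right] at hvv
      nlinarith [hvnorm]
    have hPvnorm : (0:ℝ) < ‖P v‖ := norm_pos_iff.mpr hPv0
    have hle : ‖P v‖ ≤ ‖P‖ * ‖v‖ := P.le_opNorm v
    refine le_ciSup_of_le (hbdd _) ⟨⟨P v, ⟨v, rfl⟩⟩, fun h => hPv0 (by simpa using congrArg Subtype.val h)⟩ ?_
    show ‖P‖⁻¹ ≤ ⟪v, P v⟫ / (‖v‖ * ‖P v‖)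
    rw [hvv, le_div_iff₀ (by positivity)]
    have h1 : ‖P‖⁻¹ * (‖v‖ * ‖P v‖) ≤ ‖P‖⁻¹ * (‖v‖ * (‖P‖ * ‖v‖)) := by
      have := mul_le_mul_of_nonneg_left hle hvnorm.le
      exact mul_le_mul_of_nonneg_left this (by positivity)
    calc ‖P‖⁻¹ * (‖v‖ * ‖P v‖) ≤ ‖P‖⁻¹ * (‖v‖ * (‖P‖ * ‖v‖)) := h1
      _ = ‖v‖ ^ 2 := by field_simp
  unfold infSupConst
  refine le_antisymm ?_ (le_ciInf hlow)
  -- upper bound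
  refine le_of_forall_pos_le_add ?_
  intro ε hε
  set c : ℝ := (‖P‖⁻¹ + ε)⁻¹ with hc
  have hcpos : (0:ℝ) < c := by positivity
  have hclt : c < ‖P‖ := by
    rw [hc]
    calc (‖P‖⁻¹ + ε)⁻¹ < (‖P‖⁻¹)⁻¹ := by
          apply inv_strictAnti₀ (by positivity)
          linarith
      _ = ‖P‖ := inv_inv _
  obtain ⟨u, hu⟩ : ∃ u, c * ‖u‖ < ‖Pa u‖ := by
    by_contra h
    push_neg at h
    have : ‖Pa‖ ≤ c := ContinuousLinearMap.opNorm_le_bound _ hcpos.le h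
    rw [hnorm] at this
    exact absurd this (not_le.mpr hclt)
  have hunorm : (0:ℝ) < ‖u‖ := by
    rcases eq_or_ne u 0 with rfl | h
    · simp at hu
    · exact norm_pos_iff.mpr h
  have hv0 : Pa u ≠ 0 := by
    intro h
    rw [h, norm_zero] at hu
    nlinarith
  have hvnorm : (0:ℝ) < ‖Pa u‖ := norm_pos_iff.mpr hv0
  refine ciInf_le_of_le ⟨‖P‖⁻¹, by rintro r ⟨v, rfl⟩; exact hlow v⟩
    ⟨⟨Pa u, ⟨u, rfl⟩⟩, fun h => hv0 (by simpa using congrArg Subtype.val h)⟩ ?_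
  refine ciSup_le ?_
  rintro ⟨⟨w, hwW⟩, hwne⟩
  have hw0 : w ≠ 0 := by simpa [Submodule.mk_eq_zero] using hwne
  have hwnorm : (0:ℝ) < ‖w‖ := norm_pos_iff.mpr hw0
  show ⟪Pa u, w⟫ / (‖Pa u‖ * ‖w‖) ≤ ‖P‖⁻¹ + ε
  have hiw : ⟪Pa u, w⟫ = ⟪u, w⟫ := by
    rw [hPa, ContinuousLinearMap.adjoint_inner_left, hfixW w hwW]
  have h1 : ⟪Pa u, w⟫ ≤ ‖u‖ * ‖w‖ := by rw [hiw]; exact real_inner_le_norm _ _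
  calc ⟪Pa u, w⟫ / (‖Pa u‖ * ‖w‖) ≤ (‖u‖ * ‖w‖) / (‖Pa u‖ * ‖w‖) := by
        gcongr
    _ = ‖u‖ / ‖Pa u‖ := by rw [mul_div_mul_right _ _ hwnorm.ne']
    _ ≤ ‖u‖ / (c * ‖u‖) := by
        gcongr
    _ = c⁻¹ := by
        rw [mul_comm]
        field_simp
    _ = ‖P‖⁻¹ + ε := by rw [hc, inv_inv]

end Aux

theorem stmt8 {H : Type*} [NormedAddCommGroup H] [InnerProductSpace ℝ H] [CompleteSpace H]
    (P : H →L[ℝ] H) (hP : P.comp P = P) (hP0 : P ≠ 0) :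
    IsClosed ((LinearMap.range (P : H →ₗ[ℝ] H) : Submodule ℝ H) : Set H) ∧
    IsClosed ((LinearMap.range (ContinuousLinearMap.adjoint P : H →ₗ[ℝ] H) : Submodule ℝ H) : Set H) ∧
    infSupConst (LinearMap.range (ContinuousLinearMap.adjoint P : H →ₗ[ℝ] H)) (LinearMap.range (P : H →ₗ[ℝ] H))
      = ‖P‖⁻¹ ∧
    infSupConst (LinearMap.range (P : H →ₗ[ℝ] H)) (LinearMap.range (ContinuousLinearMap.adjoint P : H →ₗ[ℝ] H))
      = ‖P‖⁻¹ := by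
  have hPa : (ContinuousLinearMap.adjoint P).comp (ContinuousLinearMap.adjoint P)
      = ContinuousLinearMap.adjoint P := aux_adj_idem P hP
  have hPa0 : ContinuousLinearMap.adjoint P ≠ 0 := by
    intro h
    have := aux_adj_norm P
    rw [h, norm_zero] at this
    exact hP0 (by rwa [eq_comm, norm_eq_zero] at this)
  refine ⟨aux_closed P hP, aux_closed _ hPa, aux_infSup P hP hP0, ?_⟩
  have := aux_infSup (ContinuousLinearMap.adjoint P) hPa hPa0
  rwa [ContinuousLinearMap.adjoint_adjoint, aux_adj_norm] at this
end
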